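/- arXiv:2212.09021 — 6 statements merged into one kernel-verified Lean document; each statement's English description precedes it below -/
import Mathlib

section
/- Let K ≥ 1, K' ≥ 0 and λ > 0. Let f = h + conj(g) be a sense-preserving (K,K')-elliptic harmonic mapping on the unit disc 𝔻, where h(z) = Σ_{n≥1} a_n z^n and g(z) = Σ_{n≥1} b_n z^n are analytic on 𝔻. If λ_f(z) ≤ λ for all z ∈ 𝔻, then for every n ≥ 1, |a_n| + |b_n| ≤ (Kλ + √K')/n. -/
open Complex Metric Filter Topology
open scoped ENNReal NNReal

private lemma coeff_bound_aux (φ : ℂ → ℂ) (c : ℕ → ℂ) (hc0 : c 0 = 0) (M : ℝ)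
    (hφ : DifferentiableOn ℂ φ (ball (0:ℂ) 1))
    (hsum : ∀ z ∈ ball (0:ℂ) 1, HasSum (fun k : ℕ => c (k+1) * z^(k+1)) (φ z))
    (hbd : ∀ z ∈ ball (0:ℂ) 1, ‖deriv φ z‖ ≤ M) :
    ∀ m : ℕ, ‖c (m+1)‖ ≤ M / ((m:ℝ)+1) := by
  intro m
  have hM0 : 0 ≤ M := le_trans (norm_nonneg _) (hbd 0 (by simp))
  set q := FormalMultilinearSeries.ofScalars ℂ c with hq
  have hhalf : ((1:ℂ)/2) ∈ ball (0:ℂ) 1 := by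
    simp [mem_ball, dist_eq]
    norm_num
  have htend0 : Tendsto (fun k : ℕ => ‖c (k+1) * ((1:ℂ)/2)^(k+1)‖) atTop (𝓝 0) := by
    simpa using (hsum _ hhalf).summable.tendsto_atTop_zero.norm
  have htend : Tendsto (fun k : ℕ => ‖q k‖ * ((1/2 : NNReal) : ℝ) ^ k) atTop (𝓝 0) := by
    rw [← tendsto_add_atTop_iff_nat 1]
    convert htend0 using 2 with k
    rw [hq, FormalMultilinearSeries.ofScalars_norm, norm_mul, norm_pow]
    norm_num
  have hps : HasFPowerSeriesOnBall φ q 0 (1/2) := by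
    have hcoe : ((1/2 : ℝ≥0) : ℝ≥0∞) = (1/2 : ℝ≥0∞) := by
      rw [ENNReal.coe_div (by norm_num)]; simp
    refine ⟨hcoe ▸ q.le_radius_of_tendsto htend, by norm_num, ?_⟩
    intro y hy
    have hy2 : ‖y‖ < 1/2 := by
      have h0 := EMetric.mem_ball.mp hy
      rw [edist_zero_right, ← hcoe, enorm_eq_nnnorm, ENNReal.coe_lt_coe] at h0
      exact_mod_cast h0
    have hy1 : y ∈ ball (0:ℂ) 1 := by
      rw [mem_ball_zero_iff]; linarith
    have h1 : HasSum (fun k : ℕ => c (k+1) • y^(k+1)) (φ y) := by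
      simpa [smul_eq_mul] using hsum y hy1
    have h2 := (hasSum_nat_add_iff (f := fun k : ℕ => c k • y ^ k) 1).mp h1
    simp only [Finset.range_one, Finset.sum_singleton, hc0, pow_zero, zero_smul,
      add_zero] at h2
    have : HasSum (fun k : ℕ => q k fun _ => y) (φ y) := by
      have e : (fun k : ℕ => q k fun _ => y) = fun k : ℕ => c k • y ^ k := by
        funext k
        exact FormalMultilinearSeries.ofScalars_apply_eq c y k
      rw [e]; exact h2
    simpa using this
  have key1 : ((Nat.factorial (m+1) : ℂ)) * c (m+1) = iteratedDeriv (m+1) φ 0 := by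
    have h3 := hps.factorial_smul (1:ℂ) (m+1)
    rw [hq, FormalMultilinearSeries.ofScalars_apply_eq] at h3
    rw [iteratedDeriv_eq_iteratedFDeriv, ← h3]
    simp [nsmul_eq_mul]
  have claim : ∀ r : NNReal, 0 < r → (r : ℝ) < 1 →
      ‖c (m+1)‖ ≤ M / ((m:ℝ)+1) * ((r:ℝ)⁻¹)^m := by
    intro r hr0 hr1
    have hsub : closedBall (0:ℂ) r ⊆ ball (0:ℂ) 1 := closedBall_subset_ball hr1
    have hana : AnalyticOnNhd ℂ φ (ball (0:ℂ) 1) := hφ.analyticOnNhd isOpen_ball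
    have hd' : DifferentiableOn ℂ (deriv φ) (closedBall (0:ℂ) r) :=
      (hana.deriv.differentiableOn).mono hsub
    have hps2 : HasFPowerSeriesOnBall (deriv φ) (cauchyPowerSeries (deriv φ) 0 r) 0 r :=
      hd'.hasFPowerSeriesOnBall hr0
    have key2 := hps2.factorial_smul (1:ℂ) m
    set X : ℂ := cauchyPowerSeries (deriv φ) 0 (r:ℝ) m (fun _ => 1) with hX
    have e : ((Nat.factorial (m+1) : ℂ)) * c (m+1) = ((Nat.factorial m : ℂ)) * X := by
      rw [key1, iteratedDeriv_succ', iteratedDeriv_eq_iteratedFDeriv, ← key2]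
      simp [nsmul_eq_mul]
    have h1 : ((Nat.factorial (m+1) : ℝ)) * ‖c (m+1)‖ = ((Nat.factorial m : ℝ)) * ‖X‖ := by
      have := congrArg norm e
      simpa [norm_mul, Complex.norm_natCast] using this
    have hmpos : (0:ℝ) < (Nat.factorial m : ℝ) := by positivity
    have enorm : ((m:ℝ)+1) * ‖c (m+1)‖ = ‖X‖ := by
      have hfact : ((Nat.factorial (m+1) : ℝ)) = ((m:ℝ)+1) * (Nat.factorial m : ℝ) := by
        rw [Nat.factorial_succ]; push_cast; ring
      have h2 : (Nat.factorial m : ℝ) * (((m:ℝ)+1) * ‖c (m+1)‖) =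
          (Nat.factorial m : ℝ) * ‖X‖ := by
        rw [hfact] at h1
        rw [← h1]; ring
      exact mul_left_cancel₀ hmpos.ne' h2
    have hXle : ‖X‖ ≤ ‖cauchyPowerSeries (deriv φ) 0 (r:ℝ) m‖ := by
      calc ‖X‖ ≤ ‖cauchyPowerSeries (deriv φ) 0 (r:ℝ) m‖ * ∏ _i : Fin m, ‖(1:ℂ)‖ :=
            ContinuousMultilinearMap.le_opNorm _ _
        _ = _ := by simp
    have hcont : Continuous fun θ : ℝ => ‖deriv φ (circleMap 0 (r:ℝ) θ)‖ := by
      apply Continuous.norm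
      apply hana.deriv.continuousOn.comp_continuous (continuous_circleMap 0 (r:ℝ))
      intro θ
      rw [mem_ball_zero_iff]
      rw [norm_circleMap_zero, _root_.abs_of_nonneg (NNReal.coe_nonneg r)]
      exact hr1
    have hint : (∫ θ in (0:ℝ)..2*Real.pi, ‖deriv φ (circleMap 0 (r:ℝ) θ)‖) ≤
        2*Real.pi*M := by
      have hle : ∀ θ ∈ Set.Icc (0:ℝ) (2*Real.pi), ‖deriv φ (circleMap 0 (r:ℝ) θ)‖ ≤ M := by
        intro θ _
        apply hbd
        rw [mem_ball_zero_iff]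
        rw [norm_circleMap_zero, _root_.abs_of_nonneg (NNReal.coe_nonneg r)]
        exact hr1
      calc (∫ θ in (0:ℝ)..2*Real.pi, ‖deriv φ (circleMap 0 (r:ℝ) θ)‖)
          ≤ ∫ _θ in (0:ℝ)..2*Real.pi, M :=
            intervalIntegral.integral_mono_on (by positivity)
              (hcont.intervalIntegrable _ _) intervalIntegrable_const hle
        _ = 2*Real.pi*M := by simp [mul_comm]
    have hPle := norm_cauchyPowerSeries_le (deriv φ) 0 (r:ℝ) m
    have hP2 : ‖cauchyPowerSeries (deriv φ) 0 (r:ℝ) m‖ ≤ M * ((r:ℝ)⁻¹)^m := by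
      refine hPle.trans ?_
      rw [_root_.abs_of_nonneg (NNReal.coe_nonneg r)]
      apply mul_le_mul_of_nonneg_right _ (by positivity)
      calc (2*Real.pi)⁻¹ * ∫ θ in (0:ℝ)..2*Real.pi, ‖deriv φ (circleMap 0 (r:ℝ) θ)‖
          ≤ (2*Real.pi)⁻¹ * (2*Real.pi*M) := by
            apply mul_le_mul_of_nonneg_left hint (by positivity)
        _ = M := by
            field_simp
    have hfin : ((m:ℝ)+1) * ‖c (m+1)‖ ≤ M * ((r:ℝ)⁻¹)^m := by
      rw [enorm]; exact hXle.trans hP2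
    have hmp : (0:ℝ) < (m:ℝ)+1 := by positivity
    calc ‖c (m+1)‖ = (((m:ℝ)+1) * ‖c (m+1)‖) / ((m:ℝ)+1) := by field_simp
      _ ≤ (M * ((r:ℝ)⁻¹)^m) / ((m:ℝ)+1) := by gcongr
      _ = M / ((m:ℝ)+1) * ((r:ℝ)⁻¹)^m := by ring
  have htendR : Tendsto (fun r : ℝ => M / ((m:ℝ)+1) * (r⁻¹)^m)
      (nhdsWithin 1 (Set.Iio 1)) (𝓝 (M / ((m:ℝ)+1))) := by
    have hca : ContinuousAt (fun r : ℝ => M / ((m:ℝ)+1) * (r⁻¹)^m) 1 :=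
      continuousAt_const.mul ((continuousAt_inv₀ one_ne_zero).pow m)
    have hval : (fun r : ℝ => M / ((m:ℝ)+1) * (r⁻¹)^m) 1 = M / ((m:ℝ)+1) := by norm_num
    have h2 : Tendsto (fun r : ℝ => M / ((m:ℝ)+1) * (r⁻¹)^m) (nhdsWithin 1 (Set.Iio 1))
        (𝓝 ((fun r : ℝ => M / ((m:ℝ)+1) * (r⁻¹)^m) 1)) := hca.continuousWithinAt
    rwa [hval] at h2
  refine ge_of_tendsto htendR ?_
  filter_upwards [Ioo_mem_nhdsLT_of_mem (by norm_num : (1:ℝ) ∈ Set.Ioc 0 1)] with r hr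
  have hr0 : 0 < r := hr.1
  have hcl := claim r.toNNReal (by simpa using hr0)
    (by rw [Real.coe_toNNReal _ hr0.le]; exact hr.2)
  rw [Real.coe_toNNReal _ hr0.le] at hcl
  exact hcl

/-- Coefficient bound for (K,K')-elliptic harmonic mappings:
if λ_f ≤ λ on 𝔻 then |a_n| + |b_n| ≤ (Kλ + √K')/n. -/
theorem coeff_bound_elliptic
    (K K' lam : ℝ) (hK : 1 ≤ K) (hK' : 0 ≤ K') (hlam : 0 < lam)
    (h g : ℂ → ℂ) (a b : ℕ → ℂ)
    (hh : DifferentiableOn ℂ h (ball (0:ℂ) 1))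
    (hg : DifferentiableOn ℂ g (ball (0:ℂ) 1))
    (hha : ∀ z ∈ ball (0:ℂ) 1, HasSum (fun n : ℕ => a (n + 1) * z ^ (n + 1)) (h z))
    (hgb : ∀ z ∈ ball (0:ℂ) 1, HasSum (fun n : ℕ => b (n + 1) * z ^ (n + 1)) (g z))
    (hsp : ∀ z ∈ ball (0:ℂ) 1,
      0 < ‖deriv h z‖ ^ 2 - ‖deriv g z‖ ^ 2)
    (hell : ∀ z ∈ ball (0:ℂ) 1,
      ‖deriv g z‖ ≤ ((K - 1) / (K + 1)) * ‖deriv h z‖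
        + Real.sqrt K' / (K + 1))
    (hlamf : ∀ z ∈ ball (0:ℂ) 1,
      |‖deriv h z‖ - ‖deriv g z‖| ≤ lam) :
    ∀ n : ℕ, 1 ≤ n →
      ‖a n‖ + ‖b n‖ ≤ (K * lam + Real.sqrt K') / n := by
  intro n hn
  obtain ⟨m, rfl⟩ : ∃ m, n = m + 1 := ⟨n - 1, (Nat.succ_pred_eq_of_pos hn).symm⟩
  set s := Real.sqrt K' with hs
  have hs0 : 0 ≤ s := Real.sqrt_nonneg _
  have hK1 : (0:ℝ) < K + 1 := by linarith
  set M := K * lam + s with hM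
  have hpt : ∀ z ∈ ball (0:ℂ) 1,
      ‖deriv h z‖ + ‖deriv g z‖ ≤ M := by
    intro z hz
    set A := ‖deriv h z‖ with hA
    set B := ‖deriv g z‖ with hB
    have hA0 : 0 ≤ A := norm_nonneg _
    have hB0 : 0 ≤ B := norm_nonneg _
    have hABl : A - B ≤ lam := (abs_le.mp (hlamf z hz)).2
    have e1 : (K+1)*B ≤ (K-1)*A + s := by
      have h2 := mul_le_mul_of_nonneg_left (hell z hz) hK1.le
      calc (K+1)*B ≤ (K+1)*(((K-1)/(K+1))*A + s/(K+1)) := h2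
        _ = (K-1)*A + s := by field_simp
    have e2 : 2*A ≤ (K+1)*lam + s := by nlinarith
    nlinarith [mul_le_mul_of_nonneg_left e2 (by linarith : (0:ℝ) ≤ K)]
  obtain ⟨u, hu1, hua⟩ : ∃ u : ℂ, ‖u‖ = 1 ∧
      u * a (m+1) = ((‖a (m+1)‖ : ℝ) : ℂ) := by
    by_cases ha : a (m+1) = 0
    · exact ⟨1, by simp, by simp [ha]⟩
    · refine ⟨((‖a (m+1)‖ : ℝ) : ℂ) / a (m+1), ?_, ?_⟩
      · rw [norm_div, Complex.norm_real, Real.norm_eq_abs, _root_.abs_of_nonneg (norm_nonneg _),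
          div_self (by simpa using ha)]
      · field_simp
  obtain ⟨v, hv1, hvb⟩ : ∃ v : ℂ, ‖v‖ = 1 ∧
      v * b (m+1) = ((‖b (m+1)‖ : ℝ) : ℂ) := by
    by_cases hb : b (m+1) = 0
    · exact ⟨1, by simp, by simp [hb]⟩
    · refine ⟨((‖b (m+1)‖ : ℝ) : ℂ) / b (m+1), ?_, ?_⟩
      · rw [norm_div, Complex.norm_real, Real.norm_eq_abs, _root_.abs_of_nonneg (norm_nonneg _),
          div_self (by simpa using hb)]
      · field_simp
  set φ : ℂ → ℂ := fun z => u * h z + v * g z with hφ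
  set c : ℕ → ℂ := fun k => if k = 0 then 0 else u * a k + v * b k with hc
  have hφdiff : DifferentiableOn ℂ φ (ball (0:ℂ) 1) :=
    ((hh.const_smul u).add (hg.const_smul v)).congr (fun z _ => by simp [hφ, smul_eq_mul])
  have hderiv : ∀ z ∈ ball (0:ℂ) 1, deriv φ z = u * deriv h z + v * deriv g z := by
    intro z hz
    have hz' := isOpen_ball.mem_nhds hz
    have hdh := hh.differentiableAt hz'
    have hdg := hg.differentiableAt hz'
    rw [hφ]
    rw [deriv_fun_add (hdh.const_mul u) (hdg.const_mul v), deriv_const_mul u hdh,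
      deriv_const_mul v hdg]
  have hbd : ∀ z ∈ ball (0:ℂ) 1, ‖deriv φ z‖ ≤ M := by
    intro z hz
    rw [hderiv z hz]
    calc ‖u * deriv h z + v * deriv g z‖ ≤ ‖u * deriv h z‖ + ‖v * deriv g z‖ :=
          norm_add_le _ _
      _ = ‖deriv h z‖ + ‖deriv g z‖ := by
          simp [norm_mul, hu1, hv1]
      _ ≤ M := hpt z hz
  have hsum : ∀ z ∈ ball (0:ℂ) 1, HasSum (fun k : ℕ => c (k+1) * z^(k+1)) (φ z) := by
    intro z hz
    have := ((hha z hz).mul_left u).add ((hgb z hz).mul_left v)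
    have e : (fun k : ℕ => c (k+1) * z^(k+1)) = fun k : ℕ =>
        u * (a (k + 1) * z ^ (k + 1)) + v * (b (k + 1) * z ^ (k + 1)) := by
      funext k
      simp only [hc, Nat.succ_ne_zero, if_false]
      ring
    rw [e]; exact this
  have hmain := coeff_bound_aux φ c (by simp [hc]) M hφdiff hsum hbd m
  have hcval : ‖c (m+1)‖ = ‖a (m+1)‖ + ‖b (m+1)‖ := by
    simp only [hc, Nat.succ_ne_zero, if_false]
    rw [hua, hvb, ← Complex.ofReal_add, Complex.norm_real, Real.norm_eq_abs,
      _root_.abs_of_nonneg (by positivity)]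
  rw [hcval] at hmain
  calc ‖a (m+1)‖ + ‖b (m+1)‖ ≤ M / ((m:ℝ)+1) := hmain
    _ = (K * lam + Real.sqrt K') / ((m+1 : ℕ) : ℝ) := by push_cast [hM, hs]; ring
end

section
/- Let K ≥ 1, K' ≥ 0 and λ > 0. Let f = h + conj(g) be a sense-preserving (K,K')-elliptic harmonic mapping on the unit disc 𝔻 with f(0) = 0, λ_f(0) = 1, and λ_f(z) ≤ λ for all z ∈ 𝔻. Then f is injective on the disc 𝔻_{ρ₁} = {z : |z| < ρ₁}, where ρ₁ = 1/(1 + Kλ + √K'). -/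
open Complex Metric ComplexConjugate
set_option maxHeartbeats 1000000

lemma sp_bound {φ : ℂ → ℂ} {M : ℝ}
    (hd : DifferentiableOn ℂ φ (ball 0 1))
    (hb : ∀ w ∈ ball (0:ℂ) 1, ‖φ w‖ ≤ M)
    {z : ℂ} (hz : z ∈ ball (0:ℂ) 1) :
    ‖φ z - φ 0‖ * (1 - ‖z‖) ≤ M * ‖z‖ := by
  have h01 : (0:ℂ) ∈ ball (0:ℂ) 1 := mem_ball_self one_pos
  set c : ℂ := φ 0 with hc
  set α : ℝ := ‖c‖ with hα
  set r : ℝ := ‖z‖ with hr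
  set X : ℝ := ‖φ z - c‖ with hX
  have hα0 : 0 ≤ α := norm_nonneg c
  have hαM : α ≤ M := hb 0 h01
  have hM0 : 0 ≤ M := le_trans hα0 hαM
  have hr1 : r < 1 := by
    have := mem_ball_zero_iff.1 hz
    rwa [← hr] at this
  have hr0 : 0 ≤ r := norm_nonneg z
  have hX0 : 0 ≤ X := norm_nonneg _
  -- main step : for every N > M
  have main : ∀ N : ℝ, M < N → X * (1 - r) ≤ N * r := by
    intro N hMN
    have hN0 : 0 < N := lt_of_le_of_lt hM0 hMN
    have hαN : α < N := lt_of_le_of_lt hαM hMN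
    set ψ : ℂ → ℂ := fun w => ((N^2 : ℝ) : ℂ) * (φ w - c) / (((N^2 : ℝ) : ℂ) - conj c * φ w)
      with hψ
    have keyR : ∀ w : ℂ, Complex.normSq (((N^2:ℝ):ℂ) - conj c * w) - N^2 * Complex.normSq (w - c)
        = (N^2 - Complex.normSq c) * (N^2 - Complex.normSq w) := by
      intro w
      simp only [Complex.normSq_apply, Complex.sub_re, Complex.sub_im, Complex.mul_re,
        Complex.mul_im, Complex.conj_re, Complex.conj_im, Complex.ofReal_re, Complex.ofReal_im]
      ring
    have hden : ∀ w ∈ ball (0:ℂ) 1, ((N^2:ℝ):ℂ) - conj c * φ w ≠ 0 := by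
      intro w hw hcontra
      have h1 : ‖conj c * φ w‖ ≤ M * M := by
        rw [norm_mul, Complex.norm_conj]
        exact mul_le_mul hαM (hb w hw) (norm_nonneg _) hM0
      have h2 : ((N^2:ℝ):ℂ) = conj c * φ w := by linear_combination hcontra
      have h3 : ‖((N^2:ℝ):ℂ)‖ = N^2 := by
        rw [Complex.norm_real, Real.norm_of_nonneg (by positivity : (0:ℝ) ≤ N^2)]
      rw [← h2, h3] at h1
      nlinarith
    have hdψ : DifferentiableOn ℂ ψ (ball 0 1) := by
      apply DifferentiableOn.div
      · exact (hd.sub_const c).const_mul _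
      · exact (differentiableOn_const _).sub (hd.const_mul (conj c))
      · exact hden
    have hψ0 : ψ 0 = 0 := by simp [hψ, ← hc]
    have hmaps : Set.MapsTo ψ (ball 0 1) (ball 0 N) := by
      intro w hw
      simp only [mem_ball_zero_iff, hψ]
      set v : ℂ := φ w with hv
      have hvM : ‖v‖ ≤ M := hb w hw
      have hDpos : 0 < ‖(((N^2:ℝ):ℂ) - conj c * v)‖ :=
        norm_pos_iff.mpr (hden w hw)
      rw [norm_div, div_lt_iff₀ hDpos, norm_mul]
      have h3 : ‖((N^2:ℝ):ℂ)‖ = N^2 := by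
        rw [Complex.norm_real, Real.norm_of_nonneg (by positivity : (0:ℝ) ≤ N^2)]
      rw [h3]
      have hsq : (N * ‖v - c‖)^2 < (‖(((N^2:ℝ):ℂ) - conj c * v)‖)^2 := by
        have hk := keyR v
        rw [← Complex.sq_norm, ← Complex.sq_norm c, ← Complex.sq_norm v,
          ← Complex.sq_norm (v - c)] at hk
        have q1 : 0 < (N^2 - ‖c‖^2) * (N^2 - ‖v‖^2) := by
          have : ‖c‖ < N := by rw [← hα]; exact hαN
          have h2 : ‖v‖ < N := lt_of_le_of_lt hvM hMN
          have h4 := norm_nonneg v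
          have h5 := norm_nonneg c
          apply mul_pos <;> nlinarith
        nlinarith [hk, q1, sq_nonneg (‖v-c‖)]
      have := lt_of_pow_lt_pow_left₀ 2 hDpos.le hsq
      nlinarith [norm_nonneg (v - c)]
    have schwarz := Complex.dist_le_div_mul_dist_of_mapsTo_ball hdψ (by rw [hψ0]; exact hmaps.mono_right ball_subset_closedBall) hz
    rw [hψ0, dist_zero_right, dist_zero_right, div_one] at schwarz
    -- schwarz : ‖ψ z‖ ≤ N * ‖z‖
    have hDz : ((N^2:ℝ):ℂ) - conj c * φ z ≠ 0 := hden z hz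
    have hDzpos : 0 < ‖(((N^2:ℝ):ℂ) - conj c * φ z)‖ := norm_pos_iff.mpr hDz
    have hψz : ‖ψ z‖ = N^2 * X / ‖(((N^2:ℝ):ℂ) - conj c * φ z)‖ := by
      rw [hψ]
      simp only [norm_div, norm_mul, Complex.norm_real,
        Real.norm_of_nonneg (by positivity : (0:ℝ) ≤ N^2), ← hX]
    have hcc : conj c * c = ((α : ℝ) : ℂ)^2 := by
      rw [mul_comm, Complex.mul_conj, hα, Complex.normSq_eq_norm_sq]
      norm_cast
    have hsplit : ((N^2:ℝ):ℂ) - conj c * φ z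
        = ((N^2 - α^2 : ℝ) : ℂ) - conj c * (φ z - c) := by
      push_cast
      linear_combination -hcc
    have hDle : ‖(((N^2:ℝ):ℂ) - conj c * φ z)‖ ≤ (N^2 - α^2) + α * X := by
      rw [hsplit]
      refine (norm_sub_le _ _).trans ?_
      rw [norm_mul, Complex.norm_conj, Complex.norm_real,
        Real.norm_of_nonneg (by nlinarith : (0:ℝ) ≤ N^2 - α^2), ← hα, ← hX]
    have e0 : N^2 * X ≤ N * r * ((N^2 - α^2) + α * X) := by
      have h1 : N^2 * X / ‖(((N^2:ℝ):ℂ) - conj c * φ z)‖ ≤ N * r := by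
        rw [← hψz]
        have := schwarz
        rw [← hr] at this
        exact this
      rw [div_le_iff₀ hDzpos] at h1
      calc N^2 * X ≤ N * r * ‖(((N^2:ℝ):ℂ) - conj c * φ z)‖ := h1
        _ ≤ N * r * ((N^2 - α^2) + α * X) := by
            apply mul_le_mul_of_nonneg_left hDle (by positivity)
    have e1 : X * (N - r * α) ≤ r * (N^2 - α^2) := by nlinarith [e0, hN0, mul_nonneg hr0 hα0]
    have e2 : (1 - r) * (N^2 - α^2) ≤ N * (N - r * α) := by
      nlinarith [mul_nonneg hr0 (mul_nonneg hN0.le (sub_nonneg.2 hαN.le)),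
        mul_nonneg (sq_nonneg α) (sub_nonneg.2 hr1.le)]
    have e3 : 0 < N - r * α := by
      have h6 : r * α ≤ α := mul_le_of_le_one_left hα0 hr1.le
      linarith
    have goal2 : X * (1 - r) * (N - r * α) ≤ N * r * (N - r * α) := by
      nlinarith [mul_le_mul_of_nonneg_left e1 (sub_nonneg.2 hr1.le),
        mul_le_mul_of_nonneg_left e2 hr0]
    exact le_of_mul_le_mul_right goal2 e3
  rcases eq_or_lt_of_le hr0 with h | hrpos
  · have hz0 : z = 0 := by
      have : ‖z‖ = 0 := by rw [← hr, ← h]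
      simpa using this
    have hX0' : X = 0 := by rw [hX, hz0, ← hc]; simp
    rw [hX0', ← h]
    simp
  by_contra hcon
  push_neg at hcon
  set N : ℝ := (M * r + X * (1 - r)) / (2 * r) with hN
  have hMN : M < N := by
    rw [hN, lt_div_iff₀ (by linarith)]
    nlinarith
  have h2 := main N hMN
  have hNr : N * r = (M * r + X * (1 - r)) / 2 := by
    rw [hN]
    field_simp
  rw [hNr] at h2
  linarith

/-- Landau-type theorem (univalence part) for (K,K')-elliptic harmonic mappings:
f is injective on the disc of radius ρ₁ = 1/(1 + Kλ + √K'). -/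
theorem landau_univalent_elliptic
    (K K' lam : ℝ) (hK : 1 ≤ K) (hK' : 0 ≤ K') (hlam : 0 < lam)
    (h g f : ℂ → ℂ)
    (hf : ∀ z ∈ ball (0:ℂ) 1, f z = h z + (starRingEnd ℂ) (g z))
    (hh : DifferentiableOn ℂ h (ball (0:ℂ) 1))
    (hg : DifferentiableOn ℂ g (ball (0:ℂ) 1))
    (hsp : ∀ z ∈ ball (0:ℂ) 1,
      0 < ‖deriv h z‖ ^ 2 - ‖deriv g z‖ ^ 2)
    (hell : ∀ z ∈ ball (0:ℂ) 1,
      ‖deriv g z‖ ≤ ((K - 1) / (K + 1)) * ‖deriv h z‖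
        + Real.sqrt K' / (K + 1))
    (hf0 : f 0 = 0)
    (hlam0 : |‖deriv h 0‖ - ‖deriv g 0‖| = 1)
    (hlamf : ∀ z ∈ ball (0:ℂ) 1,
      |‖deriv h z‖ - ‖deriv g z‖| ≤ lam) :
    Set.InjOn f (ball (0:ℂ) (1 / (1 + K * lam + Real.sqrt K'))) := by
  have ht0 : 0 ≤ Real.sqrt K' := Real.sqrt_nonneg K'
  set t : ℝ := Real.sqrt K' with htdef
  set M : ℝ := K * lam + t with hMdef
  have h01 : (0:ℂ) ∈ ball (0:ℂ) 1 := mem_ball_self one_pos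
  have hK0 : (0:ℝ) < K := lt_of_lt_of_le one_pos hK
  -- |g'(0)| < |h'(0)|
  have hab0 : ‖deriv g 0‖ < ‖deriv h 0‖ := by
    have h1 := hsp 0 h01
    nlinarith [norm_nonneg (deriv g 0), norm_nonneg (deriv h 0)]
  have hdiff1 : ‖deriv h 0‖ - ‖deriv g 0‖ = 1 := by
    rwa [_root_.abs_of_pos (sub_pos.2 hab0)] at hlam0
  have hlam1 : 1 ≤ lam := by
    have h1 := hlamf 0 h01
    rw [hlam0] at h1
    exact h1
  have hM1 : 1 ≤ M := by nlinarith
  have hM0 : 0 < M := lt_of_lt_of_le one_pos hM1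
  -- global bound |h'| + |g'| ≤ M
  have hbound : ∀ z ∈ ball (0:ℂ) 1,
      ‖deriv h z‖ + ‖deriv g z‖ ≤ M := by
    intro z hz
    have e1 := hell z hz
    have e2 := hlamf z hz
    have e3 : ‖deriv h z‖ - ‖deriv g z‖ ≤ lam :=
      le_trans (le_abs_self _) e2
    have hK1 : (0:ℝ) < K + 1 := by linarith
    have e4 : (K + 1) * ‖deriv g z‖ ≤ (K - 1) * ‖deriv h z‖ + t := by
      have e5 := mul_le_mul_of_nonneg_left e1 hK1.le
      have heq2 : (K + 1) * ((K - 1) / (K + 1) * ‖deriv h z‖ + t / (K + 1))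
          = (K - 1) * ‖deriv h z‖ + t := by
        field_simp
      linarith [e5, heq2]
    have e6 : K * (‖deriv h z‖ - ‖deriv g z‖) ≤ K * lam :=
      mul_le_mul_of_nonneg_left e3 hK0.le
    rw [hMdef]
    nlinarith
  -- derivatives are differentiable
  have hh' : DifferentiableOn ℂ (deriv h) (ball 0 1) :=
    ((hh.analyticOnNhd isOpen_ball).deriv_of_isOpen isOpen_ball).differentiableOn
  have hg' : DifferentiableOn ℂ (deriv g) (ball 0 1) :=
    ((hg.analyticOnNhd isOpen_ball).deriv_of_isOpen isOpen_ball).differentiableOn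
  -- start injectivity proof
  intro z₁ hz₁ z₂ hz₂ heq
  by_contra hne
  have hρM : 1 / (1 + K * lam + t) = 1 / (1 + M) := by rw [hMdef]; ring_nf
  rw [mem_ball_zero_iff, hρM] at hz₁ hz₂
  have hρ1 : 1 / (1 + M) < 1 := by
    rw [div_lt_one (by linarith)]
    linarith
  set r : ℝ := max (‖z₁‖) (‖z₂‖) with hrdef
  have hrρ : r < 1 / (1 + M) := max_lt hz₁ hz₂
  have hr1 : r < 1 := lt_trans hrρ hρ1
  have hr0 : 0 ≤ r := le_trans (norm_nonneg z₁) (le_max_left _ _)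
  have hz₁1 : z₁ ∈ ball (0:ℂ) 1 := by
    rw [mem_ball_zero_iff]
    exact lt_of_le_of_lt (le_max_left _ _) hr1
  have hz₂1 : z₂ ∈ ball (0:ℂ) 1 := by
    rw [mem_ball_zero_iff]
    exact lt_of_le_of_lt (le_max_right _ _) hr1
  set a : ℂ := deriv h 0 with hadef
  set b : ℂ := deriv g 0 with hbdef
  set u : ℂ := z₂ - z₁ with hudef
  have hu0 : u ≠ 0 := sub_ne_zero.2 (Ne.symm hne)
  set A : ℂ := (h z₂ - h z₁) - a * u with hAdef
  set B : ℂ := (g z₂ - g z₁) - b * u with hBdef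
  -- the basic identity from f z₁ = f z₂
  have hfe : a * u + conj (b * u) = -(A + conj B) := by
    have e₁ := hf z₁ hz₁1
    have e₂ := hf z₂ hz₂1
    have e3 : h z₂ + conj (g z₂) - (h z₁ + conj (g z₁)) = 0 := by
      rw [← e₁, ← e₂, heq]
      ring
    rw [hAdef, hBdef]
    simp only [map_sub, map_mul]
    linear_combination e3
  have habs_u : ‖u‖ ≤ ‖A‖ + ‖B‖ := by
    have h1 : ‖a * u + conj (b * u)‖ = ‖A + conj B‖ := by
      rw [hfe, norm_neg]
    have h2 : ‖u‖ ≤ ‖a * u + conj (b * u)‖ := by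
      have h3 : ‖a * u‖ - ‖conj (b * u)‖
          ≤ ‖a * u + conj (b * u)‖ := by
        have h5 := norm_sub_le (a * u + conj (b * u)) (conj (b * u))
        rw [add_sub_cancel_right] at h5
        linarith [h5]
      rw [norm_mul, Complex.norm_conj, norm_mul] at h3
      have h4 : (‖a‖ - ‖b‖) * ‖u‖
          ≤ ‖a * u + conj (b * u)‖ := by nlinarith [h3]
      rw [hdiff1] at h4
      simpa using h4
    calc ‖u‖ ≤ ‖a * u + conj (b * u)‖ := h2
      _ = ‖A + conj B‖ := h1
      _ ≤ ‖A‖ + ‖conj B‖ := norm_add_le _ _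
      _ = ‖A‖ + ‖B‖ := by rw [Complex.norm_conj]
  -- choose a unimodular μ aligning A and B
  obtain ⟨μ, hμ1, hμ⟩ : ∃ μ : ℂ, ‖μ‖ = 1 ∧
      ‖A + μ * B‖ = ‖A‖ + ‖B‖ := by
    by_cases hB : B = 0
    · exact ⟨1, by simp, by simp [hB]⟩
    by_cases hA : A = 0
    · refine ⟨(‖B‖ : ℂ) / B, ?_, ?_⟩
      · rw [norm_div, Complex.norm_real, Real.norm_of_nonneg (norm_nonneg B),
          div_self (norm_ne_zero_iff.mpr hB)]
      · rw [hA, div_mul_cancel₀ _ hB]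
        simp [Real.norm_of_nonneg (norm_nonneg B)]
    · refine ⟨(‖B‖ : ℂ) * A / ((‖A‖ : ℂ) * B), ?_, ?_⟩
      · rw [norm_div, norm_mul, norm_mul, Complex.norm_real, Complex.norm_real,
          Real.norm_of_nonneg (norm_nonneg B), Real.norm_of_nonneg (norm_nonneg A)]
        rw [mul_comm (‖B‖) (‖A‖),
          div_self (mul_ne_zero (norm_ne_zero_iff.mpr hA) (norm_ne_zero_iff.mpr hB))]
      · have hAabs : (‖A‖ : ℂ) ≠ 0 := by
          simpa using (norm_ne_zero_iff.mpr hA)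
        have key : A + (‖B‖ : ℂ) * A / ((‖A‖ : ℂ) * B) * B
            = A * ((‖A‖ : ℂ) + (‖B‖ : ℂ)) / (‖A‖ : ℂ) := by
          field_simp
        have h6 : ‖(A * ((‖A‖ : ℂ) + (‖B‖ : ℂ))
              / (‖A‖ : ℂ))‖
            = ‖A‖ * (‖A‖ + ‖B‖) / ‖A‖ := by
          rw [norm_div, norm_mul]
          congr 1
          · congr 1
            rw [show ((‖A‖ : ℂ) + (‖B‖ : ℂ))
                = ((‖A‖ + ‖B‖ : ℝ) : ℂ) by push_cast; ring,
              Complex.norm_real,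
              Real.norm_of_nonneg (add_nonneg (norm_nonneg A) (norm_nonneg B))]
          · rw [Complex.norm_real, Real.norm_of_nonneg (norm_nonneg A)]
        rw [key, h6, mul_comm, mul_div_assoc, div_self (norm_ne_zero_iff.mpr hA), mul_one]
  -- the auxiliary analytic function
  set φ : ℂ → ℂ := fun w => deriv h w + μ * deriv g w with hφdef
  have hφd : DifferentiableOn ℂ φ (ball 0 1) := hh'.add (hg'.const_mul μ)
  have hφb : ∀ w ∈ ball (0:ℂ) 1, ‖φ w‖ ≤ M := by
    intro w hw
    calc ‖φ w‖ ≤ ‖deriv h w‖ + ‖μ * deriv g w‖ :=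
          norm_add_le _ _
      _ = ‖deriv h w‖ + ‖deriv g w‖ := by rw [norm_mul, hμ1, one_mul]
      _ ≤ M := hbound w hw
  -- mean value inequality on closedBall 0 r
  have hsub : closedBall (0:ℂ) r ⊆ ball 0 1 := closedBall_subset_ball hr1
  have hG : ∀ w ∈ closedBall (0:ℂ) r,
      HasDerivWithinAt (fun x => h x + μ * g x - φ 0 * x) (φ w - φ 0) (closedBall 0 r) w := by
    intro w hw
    have hw1 : w ∈ ball (0:ℂ) 1 := hsub hw
    have dh : HasDerivAt h (deriv h w) w :=
      (hh.differentiableAt (isOpen_ball.mem_nhds hw1)).hasDerivAt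
    have dg : HasDerivAt g (deriv g w) w :=
      (hg.differentiableAt (isOpen_ball.mem_nhds hw1)).hasDerivAt
    have := ((dh.add (dg.const_mul μ)).sub ((hasDerivAt_id w).const_mul (φ 0)))
    simp only [mul_one] at this
    exact this.hasDerivWithinAt
  have hbd : ∀ w ∈ closedBall (0:ℂ) r, ‖φ w - φ 0‖ ≤ M * r / (1 - r) := by
    intro w hw
    have hw1 : w ∈ ball (0:ℂ) 1 := hsub hw
    have hspb := sp_bound hφd hφb hw1
    have hwr : ‖w‖ ≤ r := by
      have := mem_closedBall_zero_iff.1 hw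
      exact this
    rw [le_div_iff₀ (by linarith : (0:ℝ) < 1 - r)]
    nlinarith [norm_nonneg (φ w - φ 0), hspb, hwr, hM0.le]
  have hz₁c : z₁ ∈ closedBall (0:ℂ) r := by
    rw [mem_closedBall_zero_iff]
    exact le_max_left _ _
  have hz₂c : z₂ ∈ closedBall (0:ℂ) r := by
    rw [mem_closedBall_zero_iff]
    exact le_max_right _ _
  have mvi := Convex.norm_image_sub_le_of_norm_hasDerivWithin_le hG hbd
    (convex_closedBall _ _) hz₁c hz₂c
  -- identify the difference
  have hid : (h z₂ + μ * g z₂ - φ 0 * z₂) - (h z₁ + μ * g z₁ - φ 0 * z₁) = A + μ * B := by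
    rw [hAdef, hBdef, hφdef, hudef, hadef, hbdef]
    ring
  rw [hid] at mvi
  have hC1 : M * r / (1 - r) < 1 := by
    rw [div_lt_one (by linarith : (0:ℝ) < 1 - r)]
    have : r * (1 + M) < 1 := by
      have := mul_lt_mul_of_pos_right hrρ (by linarith : (0:ℝ) < 1 + M)
      rwa [div_mul_cancel₀ _ (by linarith : (1:ℝ) + M ≠ 0)] at this
    nlinarith
  have hu_pos : 0 < ‖u‖ := norm_pos_iff.mpr hu0
  have hfinal : ‖u‖ < ‖u‖ := by
    calc ‖u‖ ≤ ‖A‖ + ‖B‖ := habs_u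
      _ = ‖A + μ * B‖ := hμ.symm
      _ ≤ M * r / (1 - r) * ‖z₂ - z₁‖ := mvi
      _ = M * r / (1 - r) * ‖u‖ := by rw [← hudef]
      _ < 1 * ‖u‖ := by
          exact mul_lt_mul_of_pos_right hC1 hu_pos
      _ = ‖u‖ := one_mul _
  exact lt_irrefl _ hfinal
end

section
/- Let K ≥ 1, K' ≥ 0 and λ > 0. Let f = h + conj(g) be a sense-preserving (K,K')-elliptic harmonic mapping on the unit disc 𝔻 with f(0) = 0, λ_f(0) = 1, and λ_f(z) ≤ λ for all z ∈ 𝔻. Set ρ₁ = 1/(1 + Kλ + √K') and R₁ = ρ₁ + (Kλ + √K')(ρ₁ + ln((Kλ + √K')ρ₁)). Then the image f(𝔻_{ρ₁}) contains the disc 𝔻_{R₁} = {w : |w| < R₁}. -/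
open Complex Metric

open Filter Topology intervalIntegral

lemma coeff_bound (φ : ℂ → ℂ) (T : ℝ) (r : NNReal) (hr : 0 < (r:ℝ))
    (hφ : ContinuousOn φ (closedBall 0 r))
    (hb : ∀ z ∈ closedBall (0:ℂ) (r:ℝ), ‖φ z‖ ≤ T) (n : ℕ) :
    ‖cauchyPowerSeries φ 0 r n‖ ≤ T / (r:ℝ) ^ n := by
  have h1 := norm_cauchyPowerSeries_le φ 0 r n
  have hT : 0 ≤ T := le_trans (norm_nonneg _) (hb 0 (by simp [hr.le]))
  have hint : (∫ θ : ℝ in (0)..2 * Real.pi, ‖φ (circleMap 0 r θ)‖) ≤ 2 * Real.pi * T := by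
    have hc : ContinuousOn (fun θ => ‖φ (circleMap 0 r θ)‖) (Set.uIcc 0 (2*Real.pi)) := by
      apply (hφ.comp (continuous_circleMap 0 r).continuousOn ?_).norm
      intro θ _
      simp [circleMap, _root_.abs_of_nonneg hr.le]
    calc (∫ θ : ℝ in (0)..2 * Real.pi, ‖φ (circleMap 0 r θ)‖)
        ≤ ∫ _ : ℝ in (0)..2 * Real.pi, T := by
          apply intervalIntegral.integral_mono_on Real.two_pi_pos.le
            (hc.intervalIntegrable) intervalIntegrable_const
          intro θ hθ
          exact hb _ (by simp [circleMap, _root_.abs_of_nonneg hr.le])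
      _ = 2 * Real.pi * T := by simp [mul_comm]
  calc ‖cauchyPowerSeries φ 0 r n‖
      ≤ ((2 * Real.pi)⁻¹ * ∫ θ : ℝ in (0)..2 * Real.pi, ‖φ (circleMap 0 r θ)‖) * |(r:ℝ)|⁻¹ ^ n := h1
    _ ≤ ((2 * Real.pi)⁻¹ * (2 * Real.pi * T)) * |(r:ℝ)|⁻¹ ^ n := by
        exact mul_le_mul_of_nonneg_right
          (mul_le_mul_of_nonneg_left hint (by positivity)) (by positivity)
    _ = T / (r:ℝ) ^ n := by
        rw [_root_.abs_of_nonneg hr.le, inv_pow, ← div_eq_mul_inv,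
          inv_mul_cancel_left₀ (by positivity : (2*Real.pi) ≠ 0)]

lemma diff_bound_r (φ : ℂ → ℂ) (T : ℝ) (r : NNReal) (hr : 0 < (r:ℝ))
    (hφ : DifferentiableOn ℂ φ (closedBall 0 r))
    (hb : ∀ z ∈ closedBall (0:ℂ) (r:ℝ), ‖φ z‖ ≤ T) {w : ℂ}
    (hw : ‖w‖ < r) :
    ‖φ w - φ 0‖ ≤ T * ‖w‖ / ((r:ℝ) - ‖w‖) := by
  have hT : 0 ≤ T := le_trans (norm_nonneg _) (hb 0 (by simp [hr.le]))
  set p := cauchyPowerSeries φ 0 r with hp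
  have H : HasFPowerSeriesOnBall φ p 0 r := hφ.hasFPowerSeriesOnBall hr
  have hwball : ∀ v : ℂ, ‖v‖ < r → v ∈ Metric.eball (0:ℂ) r := by
    intro v hv
    rw [Metric.eball_coe]
    simpa [mem_ball, Complex.dist_eq] using hv
  have Hw : HasSum (fun n => p n fun _ => w) (φ w) := by
    simpa using H.hasSum (hwball w hw)
  have hcoef : ∀ n, ‖p n‖ ≤ T / (r:ℝ) ^ n :=
    coeff_bound φ T r hr hφ.continuousOn hb
  have hp0 : (p 0 fun _ => w) = φ 0 := by
    have h1 : (p 0 fun _ => w) = (p 0 fun _ => (0:ℂ)) := by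
      congr 1; ext i; exact absurd i.2 (Nat.not_lt_zero _)
    rw [h1]
    simpa using H.coeff_zero 1
  have Hw' : HasSum (fun n => p (n+1) fun _ => w) (φ w - φ 0) := by
    have h2 := (hasSum_nat_add_iff' (f := fun n => p n fun _ => w) 1).2 Hw
    rw [Finset.range_one, Finset.sum_singleton, hp0] at h2
    exact h2
  -- bound
  have hterm : ∀ n, ‖p (n+1) fun _ => w‖ ≤ T * ‖w‖ / r * (‖w‖ / r) ^ n := by
    intro n
    calc ‖p (n+1) fun _ => w‖ ≤ ‖p (n+1)‖ * ∏ _i : Fin (n+1), ‖w‖ :=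
          (p (n+1)).le_opNorm _
      _ ≤ T / (r:ℝ) ^ (n+1) * ‖w‖ ^ (n+1) := by
          simp only [Finset.prod_const, Finset.card_univ, Fintype.card_fin]
          exact mul_le_mul_of_nonneg_right (hcoef (n+1)) (by positivity)
      _ = T * ‖w‖ / r * (‖w‖ / r) ^ n := by
          rw [div_pow, pow_succ, pow_succ]; field_simp
  have hq : ‖w‖ / r < 1 := (div_lt_one hr).2 hw
  have hq0 : 0 ≤ ‖w‖ / r := by positivity
  have hS : HasSum (fun n : ℕ => T * ‖w‖ / r * (‖w‖ / r) ^ n)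
      (T * ‖w‖ / r * (1 - ‖w‖ / r)⁻¹) :=
    (hasSum_geometric_of_lt_one hq0 hq).mul_left _
  have hfin := Hw'.norm_le_of_bounded hS hterm
  calc ‖φ w - φ 0‖ = ‖φ w - φ 0‖ := rfl
    _ ≤ T * ‖w‖ / r * (1 - ‖w‖ / r)⁻¹ := hfin
    _ = T * ‖w‖ / ((r:ℝ) - ‖w‖) := by
        rw [show (1 : ℝ) - ‖w‖ / r = ((r:ℝ) - ‖w‖)/r by field_simp]
        field_simp

lemma diff_bound (φ : ℂ → ℂ) (T : ℝ) (hφ : DifferentiableOn ℂ φ (ball 0 1))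
    (hb : ∀ z ∈ ball (0:ℂ) 1, ‖φ z‖ ≤ T) {w : ℂ} (hw : ‖w‖ < 1) :
    ‖φ w - φ 0‖ ≤ T * ‖w‖ / (1 - ‖w‖) := by
  set a := ‖w‖ with ha
  have ha0 : 0 ≤ a := norm_nonneg w
  have key : ∀ r : ℝ, a < r → r < 1 →
      ‖φ w - φ 0‖ ≤ T * a / (r - a) := by
    intro r h1 h2
    have hr0 : 0 < r := lt_of_le_of_lt ha0 h1
    have hcoe : ((r.toNNReal : ℝ)) = r := Real.coe_toNNReal r hr0.le
    have hsub : closedBall (0:ℂ) r ⊆ ball 0 1 := closedBall_subset_ball h2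
    have := diff_bound_r φ T r.toNNReal (by rw [hcoe]; exact hr0)
      (by rw [hcoe]; exact hφ.mono hsub)
      (by rw [hcoe]; exact fun z hz => hb z (hsub hz)) (by rw [hcoe]; exact h1)
    rwa [hcoe] at this
  have hne : (𝓝[<] (1:ℝ)).NeBot := nhdsLT_neBot (1:ℝ)
  have htend : Tendsto (fun r : ℝ => T * a / (r - a)) (𝓝[<] (1:ℝ)) (𝓝 (T * a / (1 - a))) := by
    apply Tendsto.mono_left ?_ nhdsWithin_le_nhds
    exact tendsto_const_nhds.div (continuousAt_id.sub continuousAt_const)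
      (by simpa using sub_ne_zero_of_ne (ne_of_gt hw))
  have hev : ∀ᶠ r in 𝓝[<] (1:ℝ), ‖φ w - φ 0‖ ≤ T * a / (r - a) := by
    filter_upwards [Ioo_mem_nhdsLT_of_mem (Set.mem_Ioc.2 ⟨hw, le_refl 1⟩)] with r hr
    exact key r hr.1 hr.2
  exact ge_of_tendsto htend hev

lemma diff_bound2 (u v : ℂ → ℂ) (T : ℝ)
    (hu : DifferentiableOn ℂ u (ball 0 1)) (hv : DifferentiableOn ℂ v (ball 0 1))
    (hb : ∀ z ∈ ball (0:ℂ) 1, ‖u z‖ + ‖v z‖ ≤ T)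
    {w : ℂ} (hw : ‖w‖ < 1) :
    ‖u w - u 0‖ + ‖v w - v 0‖
      ≤ T * ‖w‖ / (1 - ‖w‖) := by
  set Δu := u w - u 0 with hΔu
  set Δv := v w - v 0 with hΔv
  set c : ℂ := (if Δu = 0 then 1 else Δu / ‖Δu‖) *
    (if Δv = 0 then 1 else (starRingEnd ℂ) Δv / ‖Δv‖) with hc
  have e1 : ∀ z : ℂ, z ≠ 0 → ‖z / (‖z‖ : ℂ)‖ = 1 := by
    intro z hz
    rw [norm_div, Complex.norm_real, Real.norm_eq_abs, _root_.abs_of_nonneg (norm_nonneg z),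
      div_self (norm_ne_zero_iff.mpr hz)]
  have habsc : ‖c‖ = 1 := by
    rw [hc, norm_mul]
    split_ifs with h1 h2 h2
    · simp
    · simp [map_div₀, Complex.norm_conj, Complex.norm_real, Real.norm_eq_abs,
        _root_.abs_of_nonneg (norm_nonneg Δv), div_self (norm_ne_zero_iff.mpr h2)]
    · simp [e1 _ h1, h1]
    · rw [← Complex.norm_conj Δv, e1 _ h1, e1 _ (by simpa using h2), one_mul]
  have hkey : ‖Δu + c * Δv‖ = ‖Δu‖ + ‖Δv‖ := by
    by_cases h1 : Δu = 0
    · simp [h1, map_mul, habsc]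
    · by_cases h2 : Δv = 0
      · simp [h2]
      · have ha0 : (‖Δu‖ : ℝ) ≠ 0 := norm_ne_zero_iff.mpr h1
        have hb0 : (‖Δv‖ : ℝ) ≠ 0 := norm_ne_zero_iff.mpr h2
        have ha0' : ((‖Δu‖ : ℝ) : ℂ) ≠ 0 := by exact_mod_cast ha0
        have hb0' : ((‖Δv‖ : ℝ) : ℂ) ≠ 0 := by exact_mod_cast hb0
        have hconj : (starRingEnd ℂ) Δv * Δv = ((‖Δv‖ : ℂ)) ^ 2 := by
          rw [mul_comm, Complex.mul_conj']
        have hmc : c * Δv = ((‖Δv‖ / ‖Δu‖ : ℝ) : ℂ) * Δu := by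
          have e2 : c * Δv = Δu * ((starRingEnd ℂ) Δv * Δv)
              / ((‖Δu‖ : ℂ) * (‖Δv‖ : ℂ)) := by
            rw [hc, if_neg h1, if_neg h2]; ring
          rw [e2, hconj]
          push_cast
          field_simp
        have e3 : Δu + c * Δv
            = (((‖Δu‖ + ‖Δv‖) / ‖Δu‖ : ℝ) : ℂ) * Δu := by
          rw [hmc]
          push_cast
          field_simp
        rw [e3, norm_mul, Complex.norm_real, Real.norm_eq_abs,
          _root_.abs_of_nonneg (by positivity : (0:ℝ) ≤ (‖Δu‖ + ‖Δv‖) / ‖Δu‖)]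
        field_simp
  have := diff_bound (fun z => u z + c * v z) T
    (fun z hz => ((hu z hz).add ((hv z hz).const_smul c)) ) ?_ hw
  · simp only [add_sub_add_comm, ← mul_sub] at this
    rwa [← hΔu, ← hΔv, hkey] at this
  · intro z hz
    calc ‖u z + c * v z‖ ≤ ‖u z‖ + ‖c * v z‖ :=
          norm_add_le _ _
      _ = ‖u z‖ + ‖v z‖ := by rw [norm_mul, habsc, one_mul]
      _ ≤ T := hb z hz

lemma ftc_bound (h g : ℂ → ℂ)
    (hh : DifferentiableOn ℂ h (ball (0:ℂ) 1)) (hg : DifferentiableOn ℂ g (ball (0:ℂ) 1))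
    (T : ℝ)
    (hT : ∀ z ∈ ball (0:ℂ) 1, ‖deriv h z‖ + ‖deriv g z‖ ≤ T)
    (z : ℂ) (hz : ‖z‖ < 1) :
    ‖h z + (starRingEnd ℂ) (g z) - (h 0 + (starRingEnd ℂ) (g 0))
        - (z * deriv h 0 + (starRingEnd ℂ) (z * deriv g 0))‖
      ≤ T * (-(Real.log (1 - ‖z‖)) - ‖z‖) := by
  set a := ‖z‖ with ha
  have ha0 : 0 ≤ a := norm_nonneg z
  -- membership of segment points
  have hmem : ∀ t : ℝ, t ∈ Set.uIcc (0:ℝ) 1 → ((t:ℂ) * z) ∈ ball (0:ℂ) 1 := by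
    intro t ht
    rw [Set.uIcc_of_le (by norm_num)] at ht
    simp only [mem_ball, Complex.dist_eq, sub_zero]
    calc ‖(t:ℂ) * z‖ = |t| * a := by
          rw [norm_mul, Complex.norm_real, Real.norm_eq_abs, ha]
      _ ≤ 1 * a := by
          apply mul_le_mul_of_nonneg_right _ ha0
          rw [_root_.abs_of_nonneg ht.1]; exact ht.2
      _ < 1 := by rw [one_mul]; exact hz
  -- analyticity facts
  have hh' : AnalyticOnNhd ℂ (deriv h) (ball (0:ℂ) 1) := (hh.analyticOnNhd isOpen_ball).deriv
  have hg' : AnalyticOnNhd ℂ (deriv g) (ball (0:ℂ) 1) := (hg.analyticOnNhd isOpen_ball).deriv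
  -- the path derivative
  set F' : ℝ → ℂ := fun t =>
    z * deriv h ((t:ℂ) * z) + (starRingEnd ℂ) (z * deriv g ((t:ℂ) * z)) with hF'
  have hline : ∀ t : ℝ, HasDerivAt (fun s : ℝ => (s:ℂ) * z) z t := by
    intro t
    simpa using (Complex.ofRealCLM.hasDerivAt (x := t)).mul_const z
  have hFderiv : ∀ t ∈ Set.uIcc (0:ℝ) 1,
      HasDerivAt (fun s : ℝ => h ((s:ℂ) * z) + (starRingEnd ℂ) (g ((s:ℂ) * z))) (F' t) t := by
    intro t ht
    have hm := hmem t ht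
    have h1 : HasDerivAt (fun s : ℝ => h ((s:ℂ) * z)) (z * deriv h ((t:ℂ)*z)) t := by
      have hout : HasDerivAt h (deriv h ((t:ℂ)*z)) ((t:ℂ)*z) :=
        (hh.differentiableAt (isOpen_ball.mem_nhds hm)).hasDerivAt
      have := (hout.hasFDerivAt.restrictScalars ℝ).comp_hasDerivAt t (hline t)
      simpa [smul_eq_mul, mul_comm, Function.comp_def] using this
    have h2 : HasDerivAt (fun s : ℝ => g ((s:ℂ) * z)) (z * deriv g ((t:ℂ)*z)) t := by
      have hout : HasDerivAt g (deriv g ((t:ℂ)*z)) ((t:ℂ)*z) :=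
        (hg.differentiableAt (isOpen_ball.mem_nhds hm)).hasDerivAt
      have := (hout.hasFDerivAt.restrictScalars ℝ).comp_hasDerivAt t (hline t)
      simpa [smul_eq_mul, mul_comm, Function.comp_def] using this
    have h3 : HasDerivAt (fun s : ℝ => (starRingEnd ℂ) (g ((s:ℂ) * z)))
        ((starRingEnd ℂ) (z * deriv g ((t:ℂ)*z))) t := by
      have := (Complex.conjCLE.toContinuousLinearMap.hasFDerivAt).comp_hasDerivAt t h2
      simpa [Function.comp_def] using this
    exact h1.add h3
  -- continuity of F'
  have hFcont : ContinuousOn F' (Set.uIcc (0:ℝ) 1) := by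
    have hc : ContinuousOn (fun t : ℝ => (t:ℂ) * z) (Set.uIcc (0:ℝ) 1) :=
      (Complex.continuous_ofReal.mul continuous_const).continuousOn
    have c1 : ContinuousOn (fun t : ℝ => deriv h ((t:ℂ)*z)) (Set.uIcc (0:ℝ) 1) :=
      hh'.continuousOn.comp hc hmem
    have c2 : ContinuousOn (fun t : ℝ => deriv g ((t:ℂ)*z)) (Set.uIcc (0:ℝ) 1) :=
      hg'.continuousOn.comp hc hmem
    exact ((continuousOn_const.mul c1).add
      ((continuousOn_const.mul c2).star))
  have hint : IntervalIntegrable F' MeasureTheory.volume 0 1 := hFcont.intervalIntegrable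
  -- FTC
  have hFTC : ∫ t in (0:ℝ)..1, F' t
      = (h z + (starRingEnd ℂ) (g z)) - (h 0 + (starRingEnd ℂ) (g 0)) := by
    have := intervalIntegral.integral_eq_sub_of_hasDerivAt hFderiv hint
    simpa using this
  set L : ℂ := z * deriv h 0 + (starRingEnd ℂ) (z * deriv g 0) with hL
  have h1a : (1:ℝ) - a > 0 := by linarith
  have hden : ∀ t : ℝ, t ∈ Set.uIcc (0:ℝ) 1 → 0 < 1 - a * t := by
    intro t ht
    rw [Set.uIcc_of_le (by norm_num)] at ht
    have : a * t ≤ a := by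
      calc a * t ≤ a * 1 := mul_le_mul_of_nonneg_left ht.2 ha0
        _ = a := mul_one a
    linarith
  set G : ℝ → ℝ := fun t => T * a * (t * a) / (1 - a * t) with hG
  have hGcont : ContinuousOn G (Set.uIcc (0:ℝ) 1) := by
    apply ContinuousOn.div
    · exact (continuousOn_const.mul (continuousOn_id.mul continuousOn_const))
    · exact (continuousOn_const.sub (continuousOn_const.mul continuousOn_id))
    · intro t ht; exact (hden t ht).ne'
  -- pointwise bound
  have hpt : ∀ t : ℝ, t ∈ Set.uIcc (0:ℝ) 1 → ‖F' t - L‖ ≤ G t := by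
    intro t ht
    have hm := hmem t ht
    rw [Set.uIcc_of_le (by norm_num)] at ht
    have hw1 : ‖(t:ℂ) * z‖ < 1 := by
      simpa [mem_ball, Complex.dist_eq] using hm
    have hwa : ‖(t:ℂ) * z‖ = t * a := by
      rw [norm_mul, Complex.norm_real, Real.norm_eq_abs, _root_.abs_of_nonneg ht.1]
    have hdb := diff_bound2 (deriv h) (deriv g) T hh'.differentiableOn hg'.differentiableOn hT hw1
    have e1 : F' t - L = z * (deriv h ((t:ℂ)*z) - deriv h 0)
        + (starRingEnd ℂ) (z * (deriv g ((t:ℂ)*z) - deriv g 0)) := by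
      rw [hF', hL]
      simp only [mul_sub, map_sub]
      ring
    have e0 : deriv h 0 = deriv h ((0:ℝ) * z) ∧ deriv g 0 = deriv g ((0:ℝ) * z) := by
      norm_num
    calc ‖F' t - L‖
        ≤ ‖z * (deriv h ((t:ℂ)*z) - deriv h 0)‖
          + ‖(starRingEnd ℂ) (z * (deriv g ((t:ℂ)*z) - deriv g 0))‖ := by
          rw [e1]; exact norm_add_le _ _
      _ = a * (‖deriv h ((t:ℂ)*z) - deriv h 0‖
            + ‖deriv g ((t:ℂ)*z) - deriv g 0‖) := by
          rw [Complex.norm_conj, norm_mul, norm_mul, ← ha]; ring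
      _ ≤ a * (T * ‖(t:ℂ)*z‖ / (1 - ‖(t:ℂ)*z‖)) := by
          apply mul_le_mul_of_nonneg_left _ ha0
          exact hdb
      _ = G t := by rw [hwa, hG]; ring
  -- antiderivative of G
  set Φ : ℝ → ℝ := fun t => -T * (Real.log (1 - a * t) + a * t) with hΦ
  have hΦderiv : ∀ t ∈ Set.uIcc (0:ℝ) 1, HasDerivAt Φ (G t) t := by
    intro t ht
    have hne : (1:ℝ) - a * t ≠ 0 := (hden t ht).ne'
    have hinner : HasDerivAt (fun s : ℝ => 1 - a * s) (-a) t := by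
      simpa using ((hasDerivAt_id t).const_mul a).const_sub (1:ℝ)
    have hlog : HasDerivAt (fun s : ℝ => Real.log (1 - a * s)) ((1 - a*t)⁻¹ * (-a)) t :=
      by simpa [Function.comp_def] using (Real.hasDerivAt_log hne).comp t hinner
    have hlin : HasDerivAt (fun s : ℝ => a * s) a t := by
      simpa using (hasDerivAt_id t).const_mul a
    have := (hlog.add hlin).const_mul (-T)
    refine this.congr_deriv ?_
    rw [hG]
    field_simp
    ring
  have hGint : ∫ t in (0:ℝ)..1, G t = T * (-(Real.log (1 - a)) - a) := by
    rw [intervalIntegral.integral_eq_sub_of_hasDerivAt hΦderiv hGcont.intervalIntegrable]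
    rw [hΦ]
    norm_num
    ring
  -- assemble
  have hsplit : h z + (starRingEnd ℂ) (g z) - (h 0 + (starRingEnd ℂ) (g 0)) - L
      = ∫ t in (0:ℝ)..1, (F' t - L) := by
    rw [intervalIntegral.integral_sub hint intervalIntegrable_const, hFTC]
    simp [hL, map_mul]
  rw [hsplit]
  calc ‖∫ t in (0:ℝ)..1, (F' t - L)‖
      = ‖∫ t in (0:ℝ)..1, (F' t - L)‖ := rfl
    _ ≤ ∫ t in (0:ℝ)..1, ‖F' t - L‖ :=
        intervalIntegral.norm_integral_le_integral_norm (by norm_num)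
    _ ≤ ∫ t in (0:ℝ)..1, G t := by
        apply intervalIntegral.integral_mono_on (by norm_num)
          ((hint.sub intervalIntegrable_const).norm) hGcont.intervalIntegrable
        intro t ht
        exact hpt t (by rw [Set.uIcc_of_le (by norm_num)]; exact ht)
    _ = T * (-(Real.log (1 - a)) - a) := hGint

lemma landau_open (h g f : ℂ → ℂ)
    (hf : ∀ z ∈ ball (0:ℂ) 1, f z = h z + (starRingEnd ℂ) (g z))
    (hh : DifferentiableOn ℂ h (ball (0:ℂ) 1)) (hg : DifferentiableOn ℂ g (ball (0:ℂ) 1))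
    (hsp : ∀ z ∈ ball (0:ℂ) 1,
      0 < ‖deriv h z‖ ^ 2 - ‖deriv g z‖ ^ 2)
    (z₀ : ℂ) (hz₀ : z₀ ∈ ball (0:ℂ) 1) :
    Filter.map f (𝓝 z₀) = 𝓝 (f z₀) := by
  set c := deriv h z₀ with hc
  set d := deriv g z₀ with hd
  have hcd : ‖d‖ < ‖c‖ := by
    have := hsp z₀ hz₀
    nlinarith [norm_nonneg c, norm_nonneg d]
  set A : ℂ →L[ℝ] ℂ :=
    (ContinuousLinearMap.restrictScalars ℝ (c • (ContinuousLinearMap.id ℂ ℂ))) +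
      (Complex.conjCLE.toContinuousLinearMap.comp
        (ContinuousLinearMap.restrictScalars ℝ (d • (ContinuousLinearMap.id ℂ ℂ)))) with hA
  have hAv : ∀ v : ℂ, A v = c * v + (starRingEnd ℂ) (d * v) := by
    intro v; simp [hA, smul_eq_mul]
  -- A is injective
  have hinj : Function.Injective A := by
    have : ∀ v : ℂ, A v = 0 → v = 0 := by
      intro v hv
      by_contra hv0
      rw [hAv] at hv
      have e1 : c * v = -(starRingEnd ℂ) (d * v) := by linear_combination hv
      have e2 : ‖c‖ * ‖v‖ = ‖d‖ * ‖v‖ := by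
        have := congrArg norm e1
        simpa [map_mul, Complex.norm_conj] using this
      have hv' : 0 < ‖v‖ := norm_pos_iff.mpr hv0
      have : ‖c‖ = ‖d‖ := by
        exact mul_right_cancel₀ hv'.ne' e2
      linarith
    intro x y hxy
    have h0 : A (x - y) = 0 := by rw [map_sub, hxy, sub_self]
    exact sub_eq_zero.1 (this _ h0)
  -- A as a continuous linear equiv
  have hbij : Function.Bijective A :=
    ⟨hinj, (LinearMap.injective_iff_surjective (f := (A : ℂ →ₗ[ℝ] ℂ))).1 hinj⟩
  set Aeq : ℂ ≃L[ℝ] ℂ :=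
    (LinearEquiv.ofBijective (A : ℂ →ₗ[ℝ] ℂ) hbij).toContinuousLinearEquiv with hAeq
  have hAeqA : (Aeq : ℂ →L[ℝ] ℂ) = A := by
    ext v; rfl
  -- strict derivative
  have hsh : HasStrictDerivAt h c z₀ :=
    ((hh.analyticOnNhd isOpen_ball) z₀ hz₀).hasStrictFDerivAt.hasStrictDerivAt
  have hsg : HasStrictDerivAt g d z₀ :=
    ((hg.analyticOnNhd isOpen_ball) z₀ hz₀).hasStrictFDerivAt.hasStrictDerivAt
  have hstrict : HasStrictFDerivAt (fun z => h z + (starRingEnd ℂ) (g z)) A z₀ := by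
    have h1 : HasStrictFDerivAt h
        (ContinuousLinearMap.restrictScalars ℝ (c • (ContinuousLinearMap.id ℂ ℂ))) z₀ := by
      have := hsh.hasStrictFDerivAt.restrictScalars ℝ
      refine this.congr_fderiv ?_
      ext v
      simp [smul_eq_mul, mul_comm]
    have h2 : HasStrictFDerivAt g
        (ContinuousLinearMap.restrictScalars ℝ (d • (ContinuousLinearMap.id ℂ ℂ))) z₀ := by
      have := hsg.hasStrictFDerivAt.restrictScalars ℝ
      refine this.congr_fderiv ?_
      ext v
      simp [smul_eq_mul, mul_comm]
    have h3 := (Complex.conjCLE.toContinuousLinearMap.hasStrictFDerivAt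
      (x := g z₀)).comp z₀ h2
    have h4 := h1.add h3
    convert h4 using 2
    all_goals rfl
  have hev : f =ᶠ[𝓝 z₀] fun z => h z + (starRingEnd ℂ) (g z) :=
    eventually_of_mem (isOpen_ball.mem_nhds hz₀) hf
  have hstrictf : HasStrictFDerivAt f (Aeq : ℂ →L[ℝ] ℂ) z₀ := by
    rw [hAeqA]
    exact hstrict.congr_of_eventuallyEq hev.symm
  exact hstrictf.map_nhds_eq_of_equiv

/-- Landau-type theorem (covering part) for (K,K')-elliptic harmonic mappings:
f(𝔻_{ρ₁}) contains the disc of radius R₁ = ρ₁ + (Kλ + √K')(ρ₁ + ln((Kλ + √K')ρ₁)). -/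
theorem landau_covering_elliptic
    (K K' lam : ℝ) (hK : 1 ≤ K) (hK' : 0 ≤ K') (hlam : 0 < lam)
    (h g f : ℂ → ℂ)
    (hf : ∀ z ∈ ball (0:ℂ) 1, f z = h z + (starRingEnd ℂ) (g z))
    (hh : DifferentiableOn ℂ h (ball (0:ℂ) 1))
    (hg : DifferentiableOn ℂ g (ball (0:ℂ) 1))
    (hsp : ∀ z ∈ ball (0:ℂ) 1,
      0 < ‖deriv h z‖ ^ 2 - ‖deriv g z‖ ^ 2)
    (hell : ∀ z ∈ ball (0:ℂ) 1,
      ‖deriv g z‖ ≤ ((K - 1) / (K + 1)) * ‖deriv h z‖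
        + Real.sqrt K' / (K + 1))
    (hf0 : f 0 = 0)
    (hlam0 : |‖deriv h 0‖ - ‖deriv g 0‖| = 1)
    (hlamf : ∀ z ∈ ball (0:ℂ) 1,
      |‖deriv h z‖ - ‖deriv g z‖| ≤ lam) :
    ball (0:ℂ)
        (1 / (1 + K * lam + Real.sqrt K')
          + (K * lam + Real.sqrt K')
            * (1 / (1 + K * lam + Real.sqrt K')
              + Real.log ((K * lam + Real.sqrt K') * (1 / (1 + K * lam + Real.sqrt K')))))
      ⊆ f '' ball (0:ℂ) (1 / (1 + K * lam + Real.sqrt K')) := by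
  have hs0 : 0 ≤ Real.sqrt K' := Real.sqrt_nonneg K'
  set s := Real.sqrt K' with hs
  set T : ℝ := K * lam + s with hT
  -- pointwise strict inequality of moduli
  have hlt : ∀ z ∈ ball (0:ℂ) 1, ‖deriv g z‖ < ‖deriv h z‖ := by
    intro z hz
    nlinarith [hsp z hz, norm_nonneg (deriv h z), norm_nonneg (deriv g z)]
  have h0mem : (0:ℂ) ∈ ball (0:ℂ) 1 := by simp
  -- λ at 0 equals 1
  have hlam0' : ‖deriv h 0‖ - ‖deriv g 0‖ = 1 := by
    have := hlt 0 h0mem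
    rw [← hlam0, _root_.abs_of_nonneg (by linarith)]
  have hlam1 : 1 ≤ lam := by
    have := hlamf 0 h0mem
    rw [hlam0] at this; exact this
  have hT1 : 1 ≤ T := by nlinarith
  have hT0 : 0 < T := by linarith
  set ρ : ℝ := 1 / (1 + T) with hρ
  have hρ0 : 0 < ρ := by rw [hρ]; positivity
  have hρhalf : ρ ≤ 1/2 := by
    rw [hρ]
    rw [div_le_div_iff₀ (by linarith) (by norm_num)]
    linarith
  have hρ1 : ρ < 1 := by linarith
  have hTρ : T * ρ = 1 - ρ := by
    rw [hρ]
    field_simp; ring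
  set R : ℝ := ρ + T * (ρ + Real.log (T * ρ)) with hR
  have hR0 : 0 < R := by
    have hx : Real.log (1 + 1/T) < 1/T := by
      have h1T : (0:ℝ) < 1/T := by positivity
      have hne1 : (1:ℝ) + 1/T ≠ 1 := by
        apply ne_of_gt; linarith
      have := Real.log_lt_sub_one_of_pos (by linarith : (0:ℝ) < 1 + 1/T) hne1
      linarith
    have hlogeq : Real.log (T * ρ) = -Real.log (1 + 1/T) := by
      rw [← Real.log_inv]
      congr 1
      rw [hρ]
      field_simp
      ring
    have hReq : R = 1 - T * Real.log (1 + 1/T) := by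
      rw [hR, hlogeq]
      have h5 : T * ρ + ρ = 1 := by linarith [hTρ]
      linear_combination h5
    rw [hReq]
    have h6 : T * (1/T) = 1 := by field_simp
    nlinarith [mul_lt_mul_of_pos_left hx hT0]
  -- sum of derivative moduli bounded by T
  have hTb : ∀ z ∈ ball (0:ℂ) 1, ‖deriv h z‖ + ‖deriv g z‖ ≤ T := by
    intro z hz
    set H := ‖deriv h z‖ with hH
    set G := ‖deriv g z‖ with hG
    have h1 : G < H := hlt z hz
    have h2 : H - G ≤ lam := by
      have := hlamf z hz
      rwa [_root_.abs_of_nonneg (by linarith)] at this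
    have h3 := hell z hz
    have hK1 : (0:ℝ) < K + 1 := by linarith
    have h4 : (K+1) * G ≤ (K-1) * H + s := by
      have h5 := mul_le_mul_of_nonneg_left h3 hK1.le
      calc (K+1)*G ≤ (K+1)*((K-1)/(K+1)*H + s/(K+1)) := h5
        _ = (K-1)*H + s := by field_simp
    have h6 : K * (H - G) ≤ K * lam := mul_le_mul_of_nonneg_left h2 (by linarith)
    rw [hT]; linarith
  -- boundary estimate
  have hbd : ∀ z : ℂ, ‖z‖ = ρ → R ≤ ‖f z‖ := by
    intro z hz
    have hz1 : ‖z‖ < 1 := by rw [hz]; linarith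
    have hzball : z ∈ ball (0:ℂ) 1 := by
      simpa [mem_ball, Complex.dist_eq] using hz1
    have hfz : f z = h z + (starRingEnd ℂ) (g z) := hf z hzball
    have hf00 : h 0 + (starRingEnd ℂ) (g 0) = 0 := by rw [← hf 0 h0mem]; exact hf0
    have hftc := ftc_bound h g hh hg T hTb z hz1
    rw [hf00, sub_zero, hz, ← hfz] at hftc
    set L := z * deriv h 0 + (starRingEnd ℂ) (z * deriv g 0) with hLdef
    have hLlow : ρ ≤ ‖L‖ := by
      have htri := norm_add_le L (-(starRingEnd ℂ) (z * deriv g 0))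
      have e1 : L + -(starRingEnd ℂ) (z * deriv g 0) = z * deriv h 0 := by
        rw [hLdef]; ring
      rw [e1, norm_neg] at htri
      have e2 : ‖z * deriv h 0‖ = ρ * ‖deriv h 0‖ := by
        rw [norm_mul, hz]
      have e3 : ‖(starRingEnd ℂ) (z * deriv g 0)‖
          = ρ * ‖deriv g 0‖ := by
        rw [Complex.norm_conj, norm_mul, hz]
      rw [e2, e3] at htri
      have e5 : ρ * ‖deriv h 0‖ - ρ * ‖deriv g 0‖ = ρ := by
        rw [← mul_sub, hlam0', mul_one]
      linarith
    have htri2 : ‖L‖ ≤ ‖f z‖ + ‖f z - L‖ := by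
      have h6 := norm_add_le (f z) (L - f z)
      have e4 : f z + (L - f z) = L := by ring
      rw [e4] at h6
      have e5 : ‖L - f z‖ = ‖f z - L‖ := by
        rw [← norm_neg]; congr 1; ring
      linarith
    have hlog : Real.log (1 - ρ) = Real.log (T * ρ) := by rw [hTρ]
    rw [hlog] at hftc
    rw [hR]
    linarith
  -- reduce goal to ball R ⊆ f '' ball ρ
  have eρ : 1 / (1 + K * lam + s) = ρ := by
    rw [hρ, hT]; ring_nf
  rw [eρ, ← hR]
  -- topology
  intro w hw
  have hρball : ball (0:ℂ) ρ ⊆ ball (0:ℂ) 1 := ball_subset_ball (by linarith)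
  have hcball : closedBall (0:ℂ) ρ ⊆ ball (0:ℂ) 1 := closedBall_subset_ball (by linarith)
  have hfc : ContinuousOn f (closedBall (0:ℂ) ρ) := by
    apply ContinuousOn.congr ((hh.continuousOn.mono hcball).add
      (Complex.continuous_conj.comp_continuousOn (hg.continuousOn.mono hcball)))
    intro z hz
    exact hf z (hcball hz)
  set C := f '' closedBall (0:ℂ) ρ with hC
  have hCclosed : IsClosed C := ((isCompact_closedBall _ _).image_of_continuousOn hfc).isClosed
  have hopen : IsOpen (f '' ball (0:ℂ) ρ) := by
    rw [isOpen_iff_mem_nhds]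
    rintro x ⟨z₀, hz₀, rfl⟩
    rw [← landau_open h g f hf hh hg hsp z₀ (hρball hz₀)]
    exact Filter.image_mem_map (isOpen_ball.mem_nhds hz₀)
  have hsubC : f '' ball (0:ℂ) ρ ⊆ C := Set.image_mono ball_subset_closedBall
  have hkey : ∀ y ∈ C, ‖y‖ < R → y ∈ f '' ball (0:ℂ) ρ := by
    rintro y ⟨z, hz, rfl⟩ hy
    rcases lt_or_eq_of_le (mem_closedBall.1 hz) with h' | h'
    · exact ⟨z, by simpa [mem_ball] using h', rfl⟩
    · exfalso
      have hzρ : ‖z‖ = ρ := by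
        rw [← h', Complex.dist_eq, sub_zero]
      linarith [hbd z hzρ]
  have hpre : IsPreconnected (ball (0:ℂ) R) := (convex_ball (0:ℂ) R).isPreconnected
  by_contra hnotin
  have habsw : ‖w‖ < R := by
    simpa [mem_ball, Complex.dist_eq] using hw
  have hwC : w ∉ C := fun hwC => hnotin (hkey w hwC habsw)
  have h0R : (0:ℂ) ∈ ball (0:ℂ) R := by
    simpa [mem_ball] using hR0
  have h0img : (0:ℂ) ∈ f '' ball (0:ℂ) ρ :=
    ⟨0, by simpa [mem_ball] using hρ0, hf0⟩
  have hcover : ball (0:ℂ) R ⊆ (f '' ball (0:ℂ) ρ) ∪ Cᶜ := by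
    intro y hy
    by_cases hyC : y ∈ C
    · exact Or.inl (hkey y hyC (by simpa [mem_ball, Complex.dist_eq] using hy))
    · exact Or.inr hyC
  have hmeet := hpre (f '' ball (0:ℂ) ρ) Cᶜ hopen hCclosed.isOpen_compl hcover
    ⟨0, h0R, h0img⟩ ⟨w, hw, hwC⟩
  rcases hmeet with ⟨y, _, hyimg, hyC⟩
  exact hyC (hsubC hyimg)
end

section
/- Let K ≥ 1 and λ > 0. Let f = h + conj(g) be a sense-preserving K-quasiregular harmonic mapping on the unit disc 𝔻 with f(0) = 0, λ_f(0) = 1, and λ_f(z) ≤ λ for all z ∈ 𝔻. Set ρ₁ = 1/(1 + Kλ). Then f is injective on the disc 𝔻_{ρ₁}, and f(𝔻_{ρ₁}) contains the disc of radius R₁ = ρ₁ + Kλ(ρ₁ + ln(Kλ ρ₁)) centered at the origin. -/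
open Complex Metric Set Filter Topology intervalIntegral

lemma coeff_bound_s4 {F : ℂ → ℂ} {M r : ℝ} (hr0 : 0 < r)
    (hF : DifferentiableOn ℂ F (closedBall 0 r))
    (hM : ∀ z ∈ closedBall (0:ℂ) r, ‖F z‖ ≤ M) (n : ℕ) :
    ‖cauchyPowerSeries F 0 r n‖ ≤ M / r ^ n := by
  have hint : IntervalIntegrable (fun θ : ℝ => ‖F (circleMap 0 r θ)‖)
      MeasureTheory.volume 0 (2 * Real.pi) := by
    apply ContinuousOn.intervalIntegrable
    apply ContinuousOn.norm
    apply hF.continuousOn.comp (continuous_circleMap 0 r).continuousOn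
    intro θ _
    exact sphere_subset_closedBall (circleMap_mem_sphere (0:ℂ) hr0.le θ)
  have h1 : (∫ θ : ℝ in (0)..2 * Real.pi, ‖F (circleMap 0 r θ)‖) ≤ 2 * Real.pi * M := by
    calc (∫ θ : ℝ in (0)..2 * Real.pi, ‖F (circleMap 0 r θ)‖)
        ≤ ∫ _ : ℝ in (0)..2 * Real.pi, M := by
          apply intervalIntegral.integral_mono_on Real.two_pi_pos.le hint
            intervalIntegrable_const
          intro θ _
          exact hM _ (sphere_subset_closedBall (circleMap_mem_sphere (0:ℂ) hr0.le θ))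
      _ = 2 * Real.pi * M := by simp [mul_comm]
  calc ‖cauchyPowerSeries F 0 r n‖
      ≤ ((2 * Real.pi)⁻¹ * ∫ θ : ℝ in (0)..2 * Real.pi, ‖F (circleMap 0 r θ)‖) * |r|⁻¹ ^ n :=
        norm_cauchyPowerSeries_le F 0 r n
    _ ≤ ((2 * Real.pi)⁻¹ * (2 * Real.pi * M)) * |r|⁻¹ ^ n := by
        apply mul_le_mul_of_nonneg_right _ (by positivity)
        exact mul_le_mul_of_nonneg_left h1 (by positivity)
    _ = M / r ^ n := by
        rw [abs_of_pos hr0]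
        field_simp
        rw [one_div, inv_pow, mul_assoc, inv_mul_cancel₀ (by positivity), mul_one]

lemma diff_bound_s4 {F : ℂ → ℂ} {M : ℝ} (hF : DifferentiableOn ℂ F (ball 0 1))
    (hM : ∀ z ∈ ball (0:ℂ) 1, ‖F z‖ ≤ M) {z : ℂ} (hz : z ∈ ball (0:ℂ) 1) :
    ‖F z - F 0‖ ≤ M * ‖z‖ / (1 - ‖z‖) := by
  have hz1 : ‖z‖ < 1 := by simpa using hz
  have hM0 : 0 ≤ M := le_trans (norm_nonneg _) (hM 0 (by simp))
  have key : ∀ r ∈ Set.Ioo (‖z‖) 1, ‖F z - F 0‖ ≤ M * (‖z‖/r) / (1 - ‖z‖/r) := by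
    intro r hr
    obtain ⟨hr1, hr2⟩ := hr
    have hr0 : 0 < r := lt_of_le_of_lt (norm_nonneg z) hr1
    set rn : NNReal := ⟨r, hr0.le⟩ with hrn
    have hrnr : (rn : ℝ) = r := rfl
    have hr0' : 0 < rn := by rw [← NNReal.coe_lt_coe]; exact hr0
    have hsub : closedBall (0:ℂ) rn ⊆ ball 0 1 := by rw [hrnr]; exact closedBall_subset_ball hr2
    have hFr := (hF.mono hsub).hasFPowerSeriesOnBall hr0'
    set p := cauchyPowerSeries F 0 rn with hp
    have hpn : ∀ n, ‖p n‖ ≤ M / r ^ n := by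
      intro n
      have := coeff_bound_s4 (F := F) (M := M) (r := r) hr0
        (by rw [← hrnr] at *; exact hF.mono hsub) (fun w hw => hM w (hsub (by rwa [hrnr])))
      rw [hp, hrnr]
      exact this n
    have hzr : z ∈ Metric.eball (0:ℂ) rn := by
      rw [EMetric.mem_ball, edist_zero_right]
      exact_mod_cast (show ‖z‖₊ < rn by rw [← NNReal.coe_lt_coe]; exact hr1)
    have hsum := hFr.hasSum hzr
    rw [zero_add] at hsum
    have hcz : (p 0 fun _ => z) = F 0 := hFr.coeff_zero _
    have hsum' : HasSum (fun n => p (n+1) fun _ => z) (F z - F 0) := by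
      refine (hasSum_nat_add_iff (f := fun n => p n fun _ => z) 1).mpr ?_
      rw [Finset.sum_range_one, hcz, sub_add_cancel]
      exact hsum
    have hq0 : (0:ℝ) ≤ ‖z‖ / r := by positivity
    have hq1 : ‖z‖ / r < 1 := (div_lt_one hr0).2 hr1
    have hgeom : HasSum (fun n : ℕ => (M * (‖z‖/r)) * (‖z‖/r) ^ n)
        ((M * (‖z‖/r)) * (1 - ‖z‖/r)⁻¹) :=
      (hasSum_geometric_of_lt_one hq0 hq1).mul_left _
    have hbd : ∀ n : ℕ, ‖p (n+1) fun _ => z‖ ≤ (M * (‖z‖/r)) * (‖z‖/r) ^ n := by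
      intro n
      calc ‖p (n+1) fun _ => z‖ ≤ ‖p (n+1)‖ * ∏ _i : Fin (n+1), ‖z‖ :=
            (p (n+1)).le_opNorm _
        _ = ‖p (n+1)‖ * ‖z‖ ^ (n+1) := by simp
        _ ≤ (M / r ^ (n+1)) * ‖z‖ ^ (n+1) :=
            mul_le_mul_of_nonneg_right (hpn (n+1)) (by positivity)
        _ = M * (‖z‖/r) ^ (n+1) := by rw [div_pow]; ring
        _ = (M * (‖z‖/r)) * (‖z‖/r) ^ n := by rw [pow_succ]; ring
    calc ‖F z - F 0‖ = ‖∑' n, p (n+1) fun _ => z‖ := by rw [hsum'.tsum_eq]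
      _ ≤ (M * (‖z‖/r)) * (1 - ‖z‖/r)⁻¹ := tsum_of_norm_bounded hgeom hbd
      _ = M * (‖z‖/r) / (1 - ‖z‖/r) := by simp [div_eq_mul_inv]
  have cont : Tendsto (fun r : ℝ => M * (‖z‖/r) / (1 - ‖z‖/r)) (𝓝[Set.Ioo (‖z‖) 1] 1)
      (𝓝 (M * ‖z‖ / (1 - ‖z‖))) := by
    have : ContinuousAt (fun r : ℝ => M * (‖z‖/r) / (1 - ‖z‖/r)) 1 := by
      have h1 : (fun r : ℝ => M * (‖z‖/r) / (1 - ‖z‖/r)) =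
          fun r : ℝ => (M * (‖z‖/r)) / (1 - ‖z‖/r) := rfl
      apply ContinuousAt.div
      · exact continuousAt_const.mul (continuousAt_const.div continuousAt_id one_ne_zero)
      · exact continuousAt_const.sub (continuousAt_const.div continuousAt_id one_ne_zero)
      · show (1:ℝ) - ‖z‖/1 ≠ 0
        rw [div_one]
        intro hc
        rw [sub_eq_zero] at hc
        exact absurd hc.symm (ne_of_lt hz1)
    simpa using this.continuousWithinAt.tendsto
  have : NeBot (𝓝[Set.Ioo (‖z‖) 1] (1:ℝ)) := right_nhdsWithin_Ioo_neBot hz1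
  exact ge_of_tendsto cont (eventually_mem_nhdsWithin.mono key)

noncomputable def csgn (c : ℂ) : ℂ := if c = 0 then 1 else c / ((‖c‖ : ℝ) : ℂ)

lemma csgn_abs (c : ℂ) : ‖csgn c‖ = 1 := by
  rcases eq_or_ne c 0 with rfl | hc
  · simp [csgn]
  · rw [csgn, if_neg hc, norm_div, Complex.norm_real, norm_norm,
      div_self (norm_ne_zero_iff.mpr hc)]

lemma csgn_combine (u v : ℂ) :
    ‖u + csgn u * (starRingEnd ℂ) (csgn v) * v‖ = ‖u‖ + ‖v‖ := by
  have h1 : (starRingEnd ℂ) (csgn v) * v = ((‖v‖ : ℝ) : ℂ) := by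
    rcases eq_or_ne v 0 with rfl | hv
    · simp [csgn]
    · rw [csgn, if_neg hv, map_div₀, Complex.conj_ofReal]
      have hne : ((‖v‖ : ℝ) : ℂ) ≠ 0 := by simpa using hv
      rw [div_mul_eq_mul_div, mul_comm, Complex.mul_conj, Complex.normSq_eq_norm_sq]
      push_cast
      rw [sq, mul_div_assoc, div_self hne, mul_one]
  rw [mul_assoc, h1]
  rcases eq_or_ne u 0 with rfl | hu
  · simp [csgn]
  · have h2 : u + csgn u * ((‖v‖ : ℝ) : ℂ)
        = u * (((‖u‖ + ‖v‖ : ℝ) : ℂ) / ((‖u‖ : ℝ) : ℂ)) := by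
      rw [csgn, if_neg hu]
      have : ((‖u‖ : ℝ) : ℂ) ≠ 0 := by simpa using hu
      push_cast
      rw [mul_div_assoc', mul_add, add_div, mul_div_assoc, div_self this, mul_one, mul_comm u]
      ring
    rw [h2, norm_mul, norm_div, Complex.norm_real, Complex.norm_real,
      Real.norm_of_nonneg (by positivity), norm_norm]
    rw [mul_div_assoc', mul_comm, mul_div_assoc, div_self (norm_ne_zero_iff.mpr hu), mul_one]

lemma two_diff_bound {φ ψ : ℂ → ℂ} {M : ℝ} (hφ : DifferentiableOn ℂ φ (ball 0 1))
    (hψ : DifferentiableOn ℂ ψ (ball 0 1))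
    (hM : ∀ z ∈ ball (0:ℂ) 1, ‖φ z‖ + ‖ψ z‖ ≤ M) {z : ℂ} (hz : z ∈ ball (0:ℂ) 1) :
    ‖φ z - φ 0‖ + ‖ψ z - ψ 0‖ ≤ M * ‖z‖ / (1 - ‖z‖) := by
  set α : ℂ := csgn (φ z - φ 0) * (starRingEnd ℂ) (csgn (ψ z - ψ 0)) with hα
  have hα1 : ‖α‖ = 1 := by
    rw [hα, norm_mul, RCLike.norm_conj, csgn_abs, csgn_abs, mul_one]
  have hF : DifferentiableOn ℂ (fun w => φ w + α * ψ w) (ball 0 1) :=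
    hφ.add ((hψ.const_smul α).congr (fun w _ => by simp [smul_eq_mul]))
  have hFM : ∀ w ∈ ball (0:ℂ) 1, ‖φ w + α * ψ w‖ ≤ M := by
    intro w hw
    calc ‖φ w + α * ψ w‖ ≤ ‖φ w‖ + ‖α * ψ w‖ := norm_add_le _ _
      _ = ‖φ w‖ + ‖ψ w‖ := by
          rw [norm_mul, hα1, one_mul]
      _ ≤ M := hM w hw
  have := diff_bound_s4 hF hFM hz
  have heq : (φ z + α * ψ z) - (φ 0 + α * ψ 0) = (φ z - φ 0) + α * (ψ z - ψ 0) := by ring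
  rw [heq] at this
  have habs : ‖(φ z - φ 0) + α * (ψ z - ψ 0)‖ = ‖φ z - φ 0‖ + ‖ψ z - ψ 0‖ := by
    rw [hα, mul_assoc]
    rw [← mul_assoc]
    exact csgn_combine _ _
  rwa [habs] at this

lemma ftc_seg {u : ℂ → ℂ} (hu : DifferentiableOn ℂ u (ball 0 1)) {z₁ z₂ : ℂ}
    (h₁ : z₁ ∈ ball (0:ℂ) 1) (h₂ : z₂ ∈ ball (0:ℂ) 1) :
    u z₂ - u z₁ = ∫ t in (0:ℝ)..1, deriv u (z₁ + ↑t * (z₂ - z₁)) * (z₂ - z₁) := by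
  have hseg : ∀ t : ℝ, t ∈ Set.Icc (0:ℝ) 1 → z₁ + ↑t * (z₂ - z₁) ∈ ball (0:ℂ) 1 := by
    intro t ht
    have hseg' : z₁ + (t : ℝ) • (z₂ - z₁) ∈ segment ℝ z₁ z₂ := by
      rw [segment_eq_image' ℝ z₁ z₂]
      exact ⟨t, ht, rfl⟩
    have := (convex_ball (0:ℂ) 1).segment_subset h₁ h₂ hseg'
    simpa [Complex.real_smul] using this
  have hcont : ContinuousOn (deriv u) (ball (0:ℂ) 1) :=
    ((hu.analyticOnNhd isOpen_ball).deriv).continuousOn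
  have hγc : Continuous (fun t : ℝ => z₁ + ↑t * (z₂ - z₁)) := by continuity
  have hderiv : ∀ t ∈ Set.uIcc (0:ℝ) 1, HasDerivAt (fun t : ℝ => u (z₁ + ↑t * (z₂ - z₁)))
      (deriv u (z₁ + ↑t * (z₂ - z₁)) * (z₂ - z₁)) t := by
    intro t ht
    rw [Set.uIcc_of_le zero_le_one] at ht
    have hmem := hseg t ht
    have hu' : HasDerivAt u (deriv u (z₁ + ↑t * (z₂ - z₁))) (z₁ + ↑t * (z₂ - z₁)) :=
      (hu.differentiableAt (isOpen_ball.mem_nhds hmem)).hasDerivAt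
    have hinner : HasDerivAt (fun w : ℂ => z₁ + w * (z₂ - z₁)) (z₂ - z₁) (↑t) := by
      simpa using ((hasDerivAt_id (↑t : ℂ)).mul_const (z₂ - z₁)).const_add z₁
    have hcomp : HasDerivAt (fun w : ℂ => u (z₁ + w * (z₂ - z₁)))
        (deriv u (z₁ + ↑t * (z₂ - z₁)) * (z₂ - z₁)) (↑t) :=
      HasDerivAt.comp (h₂ := u) (h := fun w : ℂ => z₁ + w * (z₂ - z₁)) (↑t) hu' hinner
    exact hcomp.comp_ofReal
  have hint : IntervalIntegrable (fun t : ℝ => deriv u (z₁ + ↑t * (z₂ - z₁)) * (z₂ - z₁))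
      MeasureTheory.volume 0 1 := by
    apply ContinuousOn.intervalIntegrable
    apply ContinuousOn.mul _ continuousOn_const
    apply hcont.comp hγc.continuousOn
    intro t ht
    rw [Set.uIcc_of_le zero_le_one] at ht
    exact hseg t ht
  rw [intervalIntegral.integral_eq_sub_of_hasDerivAt hderiv hint]
  simp

lemma seg_norm_le {z₁ z₂ : ℂ} {t : ℝ} (ht : t ∈ Set.Icc (0:ℝ) 1) :
    ‖z₁ + ↑t * (z₂ - z₁)‖ ≤ max ‖z₁‖ ‖z₂‖ := by
  obtain ⟨ht0, ht1⟩ := ht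
  have he : z₁ + ↑t * (z₂ - z₁) = ((1 - t : ℝ) : ℂ) * z₁ + (t : ℂ) * z₂ := by
    push_cast
    ring
  rw [he]
  calc ‖((1 - t : ℝ) : ℂ) * z₁ + (t : ℂ) * z₂‖
      ≤ ‖((1 - t : ℝ) : ℂ) * z₁‖ + ‖(t : ℂ) * z₂‖ := norm_add_le _ _
    _ = (1 - t) * ‖z₁‖ + t * ‖z₂‖ := by
        simp only [norm_mul, Complex.norm_real, Real.norm_eq_abs]
        rw [_root_.abs_of_nonneg (by linarith : (0:ℝ) ≤ 1 - t), _root_.abs_of_nonneg ht0]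
    _ ≤ (1 - t) * max ‖z₁‖ ‖z₂‖ + t * max ‖z₁‖ ‖z₂‖ := by
        have h1 : (0:ℝ) ≤ 1 - t := by linarith
        gcongr
        · exact le_max_left _ _
        · exact le_max_right _ _
    _ = max ‖z₁‖ ‖z₂‖ := by ring

lemma seg_mem {z₁ z₂ : ℂ} (h₁ : z₁ ∈ ball (0:ℂ) 1) (h₂ : z₂ ∈ ball (0:ℂ) 1)
    {t : ℝ} (ht : t ∈ Set.Icc (0:ℝ) 1) : z₁ + ↑t * (z₂ - z₁) ∈ ball (0:ℂ) 1 := by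
  rw [mem_ball_zero_iff] at *
  exact lt_of_le_of_lt (seg_norm_le ht) (max_lt h₁ h₂)

lemma core_est {h g f : ℂ → ℂ} {M : ℝ}
    (hf : ∀ z ∈ ball (0:ℂ) 1, f z = h z + (starRingEnd ℂ) (g z))
    (hh : DifferentiableOn ℂ h (ball (0:ℂ) 1)) (hg : DifferentiableOn ℂ g (ball (0:ℂ) 1))
    (hM : ∀ z ∈ ball (0:ℂ) 1, ‖deriv h z‖ + ‖deriv g z‖ ≤ M)
    (hab : 1 ≤ ‖deriv h 0‖ - ‖deriv g 0‖)
    {z₁ z₂ : ℂ} (h₁ : z₁ ∈ ball (0:ℂ) 1) (h₂ : z₂ ∈ ball (0:ℂ) 1) :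
    ‖z₂ - z₁‖ - (∫ t in (0:ℝ)..1,
        M * ‖z₁ + ↑t * (z₂ - z₁)‖ / (1 - ‖z₁ + ↑t * (z₂ - z₁)‖)) * ‖z₂ - z₁‖
      ≤ ‖f z₂ - f z₁‖ := by
  have hφd : DifferentiableOn ℂ (deriv h) (ball (0:ℂ) 1) :=
    ((hh.analyticOnNhd isOpen_ball).deriv).differentiableOn
  have hψd : DifferentiableOn ℂ (deriv g) (ball (0:ℂ) 1) :=
    ((hg.analyticOnNhd isOpen_ball).deriv).differentiableOn
  have hγc : Continuous (fun t : ℝ => z₁ + ↑t * (z₂ - z₁)) := by continuity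
  have hmem : ∀ t ∈ Set.Icc (0:ℝ) 1, z₁ + ↑t * (z₂ - z₁) ∈ ball (0:ℂ) 1 :=
    fun t ht => seg_mem h₁ h₂ ht
  have hφc : ContinuousOn (fun t : ℝ => deriv h (z₁ + ↑t * (z₂ - z₁))) (Set.Icc (0:ℝ) 1) :=
    (hφd.continuousOn).comp hγc.continuousOn hmem
  have hψc : ContinuousOn (fun t : ℝ => deriv g (z₁ + ↑t * (z₂ - z₁))) (Set.Icc (0:ℝ) 1) :=
    (hψd.continuousOn).comp hγc.continuousOn hmem
  have huIcc : Set.uIcc (0:ℝ) 1 = Set.Icc (0:ℝ) 1 := Set.uIcc_of_le zero_le_one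
  have hlt1 : ∀ t ∈ Set.Icc (0:ℝ) 1, ‖z₁ + ↑t * (z₂ - z₁)‖ < 1 := by
    intro t ht
    simpa [mem_ball_zero_iff] using hmem t ht
  -- integrability of the various integrands
  have int_nφ : IntervalIntegrable (fun t : ℝ => ‖deriv h (z₁ + ↑t * (z₂ - z₁)) - deriv h 0‖)
      MeasureTheory.volume 0 1 :=
    ContinuousOn.intervalIntegrable (by rw [huIcc]; exact (hφc.sub continuousOn_const).norm)
  have int_nψ : IntervalIntegrable (fun t : ℝ => ‖deriv g (z₁ + ↑t * (z₂ - z₁)) - deriv g 0‖)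
      MeasureTheory.volume 0 1 :=
    ContinuousOn.intervalIntegrable (by rw [huIcc]; exact (hψc.sub continuousOn_const).norm)
  have int_bnd : IntervalIntegrable
      (fun t : ℝ => M * ‖z₁ + ↑t * (z₂ - z₁)‖ / (1 - ‖z₁ + ↑t * (z₂ - z₁)‖))
      MeasureTheory.volume 0 1 := by
    apply ContinuousOn.intervalIntegrable
    rw [huIcc]
    apply ContinuousOn.div (continuousOn_const.mul hγc.continuousOn.norm)
      (continuousOn_const.sub hγc.continuousOn.norm)
    intro t ht
    have := hlt1 t ht
    intro hc
    rw [Pi.sub_apply, sub_eq_zero] at hc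
    exact absurd hc.symm (ne_of_lt this)
  have int_φv : IntervalIntegrable (fun t : ℝ => deriv h (z₁ + ↑t * (z₂ - z₁)) * (z₂ - z₁))
      MeasureTheory.volume 0 1 :=
    ContinuousOn.intervalIntegrable (by rw [huIcc]; exact hφc.mul continuousOn_const)
  have int_ψv : IntervalIntegrable (fun t : ℝ => deriv g (z₁ + ↑t * (z₂ - z₁)) * (z₂ - z₁))
      MeasureTheory.volume 0 1 :=
    ContinuousOn.intervalIntegrable (by rw [huIcc]; exact hψc.mul continuousOn_const)
  -- FTC identities
  have E1 := ftc_seg hh h₁ h₂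
  have E2 := ftc_seg hg h₁ h₂
  -- remainder integrals
  have I1 : (∫ t in (0:ℝ)..1, (deriv h (z₁ + ↑t * (z₂ - z₁)) - deriv h 0) * (z₂ - z₁))
      = (h z₂ - h z₁) - deriv h 0 * (z₂ - z₁) := by
    have hfun : (fun t : ℝ => (deriv h (z₁ + ↑t * (z₂ - z₁)) - deriv h 0) * (z₂ - z₁))
        = fun t : ℝ => deriv h (z₁ + ↑t * (z₂ - z₁)) * (z₂ - z₁) - deriv h 0 * (z₂ - z₁) := by
      funext t; ring
    rw [hfun, intervalIntegral.integral_sub int_φv intervalIntegrable_const,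
      intervalIntegral.integral_const, ← E1]
    simp
  have I2 : (∫ t in (0:ℝ)..1, (deriv g (z₁ + ↑t * (z₂ - z₁)) - deriv g 0) * (z₂ - z₁))
      = (g z₂ - g z₁) - deriv g 0 * (z₂ - z₁) := by
    have hfun : (fun t : ℝ => (deriv g (z₁ + ↑t * (z₂ - z₁)) - deriv g 0) * (z₂ - z₁))
        = fun t : ℝ => deriv g (z₁ + ↑t * (z₂ - z₁)) * (z₂ - z₁) - deriv g 0 * (z₂ - z₁) := by
      funext t; ring
    rw [hfun, intervalIntegral.integral_sub int_ψv intervalIntegrable_const,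
      intervalIntegral.integral_const, ← E2]
    simp
  -- norm bounds on remainders
  have B1 : ‖(h z₂ - h z₁) - deriv h 0 * (z₂ - z₁)‖
      ≤ (∫ t in (0:ℝ)..1, ‖deriv h (z₁ + ↑t * (z₂ - z₁)) - deriv h 0‖) * ‖z₂ - z₁‖ := by
    rw [← I1]
    calc ‖∫ t in (0:ℝ)..1, (deriv h (z₁ + ↑t * (z₂ - z₁)) - deriv h 0) * (z₂ - z₁)‖
        ≤ ∫ t in (0:ℝ)..1, ‖(deriv h (z₁ + ↑t * (z₂ - z₁)) - deriv h 0) * (z₂ - z₁)‖ :=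
          intervalIntegral.norm_integral_le_integral_norm zero_le_one
      _ = ∫ t in (0:ℝ)..1, ‖deriv h (z₁ + ↑t * (z₂ - z₁)) - deriv h 0‖ * ‖z₂ - z₁‖ := by
          simp [norm_mul]
      _ = (∫ t in (0:ℝ)..1, ‖deriv h (z₁ + ↑t * (z₂ - z₁)) - deriv h 0‖) * ‖z₂ - z₁‖ :=
          intervalIntegral.integral_mul_const _ _
  have B2 : ‖(g z₂ - g z₁) - deriv g 0 * (z₂ - z₁)‖
      ≤ (∫ t in (0:ℝ)..1, ‖deriv g (z₁ + ↑t * (z₂ - z₁)) - deriv g 0‖) * ‖z₂ - z₁‖ := by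
    rw [← I2]
    calc ‖∫ t in (0:ℝ)..1, (deriv g (z₁ + ↑t * (z₂ - z₁)) - deriv g 0) * (z₂ - z₁)‖
        ≤ ∫ t in (0:ℝ)..1, ‖(deriv g (z₁ + ↑t * (z₂ - z₁)) - deriv g 0) * (z₂ - z₁)‖ :=
          intervalIntegral.norm_integral_le_integral_norm zero_le_one
      _ = ∫ t in (0:ℝ)..1, ‖deriv g (z₁ + ↑t * (z₂ - z₁)) - deriv g 0‖ * ‖z₂ - z₁‖ := by
          simp [norm_mul]
      _ = (∫ t in (0:ℝ)..1, ‖deriv g (z₁ + ↑t * (z₂ - z₁)) - deriv g 0‖) * ‖z₂ - z₁‖ :=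
          intervalIntegral.integral_mul_const _ _
  -- sum of the two integrals is bounded by the integral of the bound
  have SB : (∫ t in (0:ℝ)..1, ‖deriv h (z₁ + ↑t * (z₂ - z₁)) - deriv h 0‖)
        + (∫ t in (0:ℝ)..1, ‖deriv g (z₁ + ↑t * (z₂ - z₁)) - deriv g 0‖)
      ≤ ∫ t in (0:ℝ)..1,
          M * ‖z₁ + ↑t * (z₂ - z₁)‖ / (1 - ‖z₁ + ↑t * (z₂ - z₁)‖) := by
    rw [← intervalIntegral.integral_add int_nφ int_nψ]
    apply intervalIntegral.integral_mono_on zero_le_one (int_nφ.add int_nψ) int_bnd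
    intro t ht
    exact two_diff_bound hφd hψd hM (hmem t ht)
  -- decomposition of f z₂ - f z₁
  have key : f z₂ - f z₁
      = (deriv h 0 * (z₂ - z₁) + (starRingEnd ℂ) (deriv g 0 * (z₂ - z₁)))
        + (((h z₂ - h z₁) - deriv h 0 * (z₂ - z₁))
          + (starRingEnd ℂ) ((g z₂ - g z₁) - deriv g 0 * (z₂ - z₁))) := by
    rw [hf z₂ h₂, hf z₁ h₁]
    rw [map_sub, map_sub]
    ring
  -- lower bound for the main term
  have F1 : ‖z₂ - z₁‖ ≤ ‖deriv h 0 * (z₂ - z₁) + (starRingEnd ℂ) (deriv g 0 * (z₂ - z₁))‖ := by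
    have t1 : ‖deriv h 0 * (z₂ - z₁)‖ - ‖(starRingEnd ℂ) (deriv g 0 * (z₂ - z₁))‖
        ≤ ‖deriv h 0 * (z₂ - z₁) + (starRingEnd ℂ) (deriv g 0 * (z₂ - z₁))‖ := by
      have hW := norm_sub_norm_le (deriv h 0 * (z₂ - z₁))
        (-(starRingEnd ℂ) (deriv g 0 * (z₂ - z₁)))
      rw [sub_neg_eq_add, norm_neg] at hW
      exact hW
    rw [RCLike.norm_conj, norm_mul, norm_mul] at t1
    nlinarith [norm_nonneg (z₂ - z₁), norm_nonneg (deriv g 0)]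
  -- triangle inequalities
  set A := deriv h 0 * (z₂ - z₁) + (starRingEnd ℂ) (deriv g 0 * (z₂ - z₁)) with hA
  set Y₁ := (h z₂ - h z₁) - deriv h 0 * (z₂ - z₁) with hY₁
  set Y₂ := (g z₂ - g z₁) - deriv g 0 * (z₂ - z₁) with hY₂
  have F4 : ‖A‖ - (‖Y₁‖ + ‖Y₂‖) ≤ ‖A + (Y₁ + (starRingEnd ℂ) Y₂)‖ := by
    have t1 : ‖A‖ ≤ ‖A + (Y₁ + (starRingEnd ℂ) Y₂)‖ + ‖Y₁ + (starRingEnd ℂ) Y₂‖ := by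
      have hW := norm_sub_norm_le A (-(Y₁ + (starRingEnd ℂ) Y₂))
      rw [sub_neg_eq_add, norm_neg] at hW
      linarith
    have t2 : ‖Y₁ + (starRingEnd ℂ) Y₂‖ ≤ ‖Y₁‖ + ‖Y₂‖ := by
      calc ‖Y₁ + (starRingEnd ℂ) Y₂‖ ≤ ‖Y₁‖ + ‖(starRingEnd ℂ) Y₂‖ := norm_add_le _ _
        _ = ‖Y₁‖ + ‖Y₂‖ := by rw [RCLike.norm_conj]
    linarith
  have hnormv : (0:ℝ) ≤ ‖z₂ - z₁‖ := norm_nonneg _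
  have Fkey : ‖f z₂ - f z₁‖ = ‖A + (Y₁ + (starRingEnd ℂ) Y₂)‖ := by rw [key]
  have mul_ineq : (‖Y₁‖ + ‖Y₂‖)
      ≤ (∫ t in (0:ℝ)..1, M * ‖z₁ + ↑t * (z₂ - z₁)‖ / (1 - ‖z₁ + ↑t * (z₂ - z₁)‖)) * ‖z₂ - z₁‖ := by
    calc ‖Y₁‖ + ‖Y₂‖
        ≤ ((∫ t in (0:ℝ)..1, ‖deriv h (z₁ + ↑t * (z₂ - z₁)) - deriv h 0‖)
          + (∫ t in (0:ℝ)..1, ‖deriv g (z₁ + ↑t * (z₂ - z₁)) - deriv g 0‖)) * ‖z₂ - z₁‖ := by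
          rw [add_mul]; exact add_le_add B1 B2
      _ ≤ _ := mul_le_mul_of_nonneg_right SB hnormv
  rw [Fkey]
  linarith

noncomputable def harmEquiv (a b : ℂ) (hab : ‖b‖ < ‖a‖) : ℂ ≃L[ℝ] ℂ := by
  have hD : Complex.normSq a - Complex.normSq b ≠ 0 := by
    have h1 : Complex.normSq b < Complex.normSq a := by
      simp only [Complex.normSq_eq_norm_sq]
      exact pow_lt_pow_left₀ hab (norm_nonneg b) two_ne_zero
    linarith
  have hDc : ((Complex.normSq a - Complex.normSq b : ℝ) : ℂ) ≠ 0 :=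
    Complex.ofReal_ne_zero.mpr hD
  refine LinearEquiv.toContinuousLinearEquiv
    { toFun := fun v => a * v + (starRingEnd ℂ) b * (starRingEnd ℂ) v
      invFun := fun w => ((starRingEnd ℂ) a * w - (starRingEnd ℂ) b * (starRingEnd ℂ) w)
        / ((Complex.normSq a - Complex.normSq b : ℝ) : ℂ)
      map_add' := by intro x y; simp [map_add]; ring
      map_smul' := by
        intro r x
        simp only [Complex.real_smul, map_mul, Complex.conj_ofReal, RingHom.id_apply]
        ring
      left_inv := ?_
      right_inv := ?_ }
  · intro v
    have key : (starRingEnd ℂ) a * (a * v + (starRingEnd ℂ) b * (starRingEnd ℂ) v)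
        - (starRingEnd ℂ) b * ((starRingEnd ℂ) a * (starRingEnd ℂ) v + b * v)
        = ((Complex.normSq a - Complex.normSq b : ℝ) : ℂ) * v := by
      push_cast
      linear_combination v * Complex.mul_conj a - v * Complex.mul_conj b
    simp only []
    rw [map_add, map_mul, map_mul, Complex.conj_conj, Complex.conj_conj, key,
      mul_comm, mul_div_assoc, div_self hDc, mul_one]
  · intro w
    have key : a * ((starRingEnd ℂ) a * w - (starRingEnd ℂ) b * (starRingEnd ℂ) w)
        + (starRingEnd ℂ) b * (a * (starRingEnd ℂ) w - b * w)
        = ((Complex.normSq a - Complex.normSq b : ℝ) : ℂ) * w := by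
      push_cast
      linear_combination w * Complex.mul_conj a - w * Complex.mul_conj b
    simp only []
    rw [map_div₀, map_sub, map_mul, map_mul, Complex.conj_conj, Complex.conj_conj,
      Complex.conj_conj, Complex.conj_ofReal, ← mul_div_assoc, ← mul_div_assoc,
      ← add_div, key,
      mul_comm, mul_div_assoc, div_self hDc, mul_one]

lemma harmEquiv_apply (a b : ℂ) (hab : ‖b‖ < ‖a‖) (v : ℂ) :
    harmEquiv a b hab v = a * v + (starRingEnd ℂ) b * (starRingEnd ℂ) v := rfl

lemma map_nhds_eq_harm {h g f : ℂ → ℂ}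
    (hf : ∀ z ∈ ball (0:ℂ) 1, f z = h z + (starRingEnd ℂ) (g z))
    (hh : DifferentiableOn ℂ h (ball (0:ℂ) 1))
    (hg : DifferentiableOn ℂ g (ball (0:ℂ) 1))
    (hsp : ∀ z ∈ ball (0:ℂ) 1, ‖deriv g z‖ < ‖deriv h z‖)
    {z₀ : ℂ} (hz₀ : z₀ ∈ ball (0:ℂ) 1) :
    Filter.map f (𝓝 z₀) = 𝓝 (f z₀) := by
  -- strict derivatives of h and g
  have hstrh : HasStrictDerivAt h (deriv h z₀) z₀ := by
    obtain ⟨p, hp⟩ := hh.analyticAt (isOpen_ball.mem_nhds hz₀)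
    have hs := hp.hasStrictDerivAt
    have hd := hs.hasDerivAt.deriv
    rwa [← hd] at hs
  have hstrg : HasStrictDerivAt g (deriv g z₀) z₀ := by
    obtain ⟨p, hp⟩ := hg.analyticAt (isOpen_ball.mem_nhds hz₀)
    have hs := hp.hasStrictDerivAt
    have hd := hs.hasDerivAt.deriv
    rwa [← hd] at hs
  set a := deriv h z₀
  set b := deriv g z₀
  have hab : ‖b‖ < ‖a‖ := hsp z₀ hz₀
  set e := harmEquiv a b hab
  -- strict fderiv of f over ℝ
  have hFh : HasStrictFDerivAt h ((ContinuousLinearMap.smulRight (1 : ℂ →L[ℂ] ℂ) a).restrictScalars ℝ) z₀ :=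
    hstrh.hasStrictFDerivAt.restrictScalars ℝ
  have hFg : HasStrictFDerivAt g ((ContinuousLinearMap.smulRight (1 : ℂ →L[ℂ] ℂ) b).restrictScalars ℝ) z₀ :=
    hstrg.hasStrictFDerivAt.restrictScalars ℝ
  have hconj : HasStrictFDerivAt (fun w : ℂ => (starRingEnd ℂ) w)
      (Complex.conjCLE.toContinuousLinearMap) (g z₀) :=
    Complex.conjCLE.toContinuousLinearMap.hasStrictFDerivAt
  have hFcg : HasStrictFDerivAt (fun w : ℂ => (starRingEnd ℂ) (g w))
      (Complex.conjCLE.toContinuousLinearMap.comp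
        ((ContinuousLinearMap.smulRight (1 : ℂ →L[ℂ] ℂ) b).restrictScalars ℝ)) z₀ :=
    hconj.comp z₀ hFg
  have hsum := hFh.add hFcg
  have heq : ((ContinuousLinearMap.smulRight (1 : ℂ →L[ℂ] ℂ) a).restrictScalars ℝ
      + Complex.conjCLE.toContinuousLinearMap.comp
        ((ContinuousLinearMap.smulRight (1 : ℂ →L[ℂ] ℂ) b).restrictScalars ℝ))
      = (e : ℂ →L[ℝ] ℂ) := by
    apply ContinuousLinearMap.ext
    intro v
    simp only [ContinuousLinearMap.add_apply, ContinuousLinearMap.coe_comp',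
      Function.comp_apply, ContinuousLinearMap.coe_restrictScalars',
      ContinuousLinearMap.smulRight_apply, ContinuousLinearMap.one_apply,
      smul_eq_mul, ContinuousLinearEquiv.coe_coe]
    show v * a + Complex.conjCLE (v * b) = e v
    rw [harmEquiv_apply]
    simp only [Complex.conjCLE_apply, map_mul]
    ring
  rw [heq] at hsum
  have hEq : f =ᶠ[𝓝 z₀] fun w => h w + (starRingEnd ℂ) (g w) :=
    Filter.eventuallyEq_of_mem (isOpen_ball.mem_nhds hz₀) hf
  have hFf : HasStrictFDerivAt f (e : ℂ →L[ℝ] ℂ) z₀ := hsum.congr_of_eventuallyEq hEq.symm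
  exact hFf.map_nhds_eq_of_equiv

lemma log_integral {M ρ : ℝ} (hρ0 : 0 < ρ) (hρ1 : ρ < 1) :
    (∫ t in (0:ℝ)..1, M * (t * ρ) / (1 - t * ρ))
      = -M - M * Real.log (1 - ρ) / ρ := by
  have hne : ∀ t ∈ Set.Icc (0:ℝ) 1, 1 - t * ρ ≠ 0 := by
    intro t ht
    obtain ⟨ht0, ht1⟩ := ht
    have h1 : t * ρ ≤ ρ := by nlinarith
    have h2 : 0 ≤ t * ρ := by positivity
    intro hc
    nlinarith [sub_eq_zero.mp hc]
  have hderiv : ∀ t ∈ Set.uIcc (0:ℝ) 1,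
      HasDerivAt (fun t : ℝ => M * (-t) - (M/ρ) * Real.log (1 - t * ρ))
        (M * (t * ρ) / (1 - t * ρ)) t := by
    intro t ht
    rw [Set.uIcc_of_le zero_le_one] at ht
    have h0 : 1 - t * ρ ≠ 0 := hne t ht
    have hinner : HasDerivAt (fun t : ℝ => 1 - t * ρ) (-ρ) t := by
      simpa using ((hasDerivAt_id t).mul_const ρ).const_sub 1
    have hlog : HasDerivAt (fun t : ℝ => Real.log (1 - t * ρ)) ((1 - t * ρ)⁻¹ * (-ρ)) t :=
      HasDerivAt.comp (h₂ := Real.log) t (Real.hasDerivAt_log h0) hinner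
    have hall : HasDerivAt (fun t : ℝ => M * (-t) - (M/ρ) * Real.log (1 - t * ρ))
        (M * (-1) - (M/ρ) * ((1 - t * ρ)⁻¹ * (-ρ))) t :=
      (((hasDerivAt_id t).neg.const_mul M)).sub (hlog.const_mul (M/ρ))
    convert hall using 1
    field_simp
    ring
  have hint : IntervalIntegrable (fun t : ℝ => M * (t * ρ) / (1 - t * ρ))
      MeasureTheory.volume 0 1 := by
    apply ContinuousOn.intervalIntegrable
    rw [Set.uIcc_of_le zero_le_one]
    exact ContinuousOn.div (by fun_prop) (by fun_prop) hne
  rw [intervalIntegral.integral_eq_sub_of_hasDerivAt hderiv hint]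
  simp [Real.log_one]
  ring

lemma ray_bound {h g f : ℂ → ℂ} {M : ℝ}
    (hf : ∀ z ∈ ball (0:ℂ) 1, f z = h z + (starRingEnd ℂ) (g z))
    (hh : DifferentiableOn ℂ h (ball (0:ℂ) 1)) (hg : DifferentiableOn ℂ g (ball (0:ℂ) 1))
    (hM : ∀ z ∈ ball (0:ℂ) 1, ‖deriv h z‖ + ‖deriv g z‖ ≤ M)
    (hab : 1 ≤ ‖deriv h 0‖ - ‖deriv g 0‖)
    {ρ : ℝ} (hρ0 : 0 < ρ) (hρ1 : ρ < 1)
    {z : ℂ} (hz : ‖z‖ = ρ) : ρ + M * (ρ + Real.log (1 - ρ)) ≤ ‖f z - f 0‖ := by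
  have h0 : (0:ℂ) ∈ ball (0:ℂ) 1 := by simp
  have hzb : z ∈ ball (0:ℂ) 1 := by rw [mem_ball_zero_iff, hz]; exact hρ1
  have hcore := core_est hf hh hg hM hab h0 hzb
  have hintEq : (∫ t in (0:ℝ)..1,
        M * ‖(0:ℂ) + ↑t * (z - 0)‖ / (1 - ‖(0:ℂ) + ↑t * (z - 0)‖))
      = ∫ t in (0:ℝ)..1, M * (t * ρ) / (1 - t * ρ) := by
    apply intervalIntegral.integral_congr
    intro t ht
    rw [Set.uIcc_of_le zero_le_one] at ht
    have hnz : ‖(0:ℂ) + ↑t * (z - 0)‖ = t * ρ := by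
      rw [zero_add, sub_zero, norm_mul, Complex.norm_real, Real.norm_eq_abs,
        _root_.abs_of_nonneg ht.1, hz]
    show M * ‖(0:ℂ) + ↑t * (z - 0)‖ / (1 - ‖(0:ℂ) + ↑t * (z - 0)‖) = M * (t * ρ) / (1 - t * ρ)
    rw [hnz]
  rw [hintEq, log_integral hρ0 hρ1, sub_zero, hz] at hcore
  have harith : ρ - (-M - M * Real.log (1 - ρ) / ρ) * ρ
      = ρ + M * (ρ + Real.log (1 - ρ)) := by
    field_simp
    ring
  linarith

lemma int_bnd_integrable {z₁ z₂ : ℂ} (h₁ : z₁ ∈ ball (0:ℂ) 1) (h₂ : z₂ ∈ ball (0:ℂ) 1)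
    (M : ℝ) : IntervalIntegrable
      (fun t : ℝ => M * ‖z₁ + ↑t * (z₂ - z₁)‖ / (1 - ‖z₁ + ↑t * (z₂ - z₁)‖))
      MeasureTheory.volume 0 1 := by
  have hγc : Continuous (fun t : ℝ => z₁ + ↑t * (z₂ - z₁)) := by continuity
  apply ContinuousOn.intervalIntegrable
  rw [Set.uIcc_of_le zero_le_one]
  apply ContinuousOn.div (continuousOn_const.mul hγc.continuousOn.norm)
    (continuousOn_const.sub hγc.continuousOn.norm)
  intro t ht
  have h1 : ‖z₁ + ↑t * (z₂ - z₁)‖ < 1 :=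
    lt_of_le_of_lt (seg_norm_le ht)
      (max_lt (mem_ball_zero_iff.mp h₁) (mem_ball_zero_iff.mp h₂))
  intro hc
  rw [Pi.sub_apply, sub_eq_zero] at hc
  exact absurd hc.symm (ne_of_lt h1)


/-- Landau-type theorem for K-quasiregular harmonic mappings with λ_f(0) = 1:
f is injective on 𝔻_{ρ₁}, ρ₁ = 1/(1 + Kλ), and f(𝔻_{ρ₁}) contains the disc of
radius R₁ = ρ₁ + Kλ(ρ₁ + ln(Kλρ₁)). -/
theorem landau_quasiregular
    (K lam : ℝ) (hK : 1 ≤ K) (hlam : 0 < lam)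
    (h g f : ℂ → ℂ)
    (hf : ∀ z ∈ ball (0:ℂ) 1, f z = h z + (starRingEnd ℂ) (g z))
    (hh : DifferentiableOn ℂ h (ball (0:ℂ) 1))
    (hg : DifferentiableOn ℂ g (ball (0:ℂ) 1))
    (hsp : ∀ z ∈ ball (0:ℂ) 1,
      0 < ‖deriv h z‖ ^ 2 - ‖deriv g z‖ ^ 2)
    (hqr : ∀ z ∈ ball (0:ℂ) 1,
      ‖deriv h z‖ + ‖deriv g z‖
        ≤ K * |‖deriv h z‖ - ‖deriv g z‖|)
    (hf0 : f 0 = 0)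
    (hlam0 : |‖deriv h 0‖ - ‖deriv g 0‖| = 1)
    (hlamf : ∀ z ∈ ball (0:ℂ) 1,
      |‖deriv h z‖ - ‖deriv g z‖| ≤ lam) :
    Set.InjOn f (ball (0:ℂ) (1 / (1 + K * lam))) ∧
      ball (0:ℂ)
          (1 / (1 + K * lam)
            + K * lam * (1 / (1 + K * lam) + Real.log (K * lam * (1 / (1 + K * lam)))))
        ⊆ f '' ball (0:ℂ) (1 / (1 + K * lam)) := by
  set M := K * lam with hMdef
  have hK0 : (0:ℝ) < K := lt_of_lt_of_le one_pos hK
  have h0mem : (0:ℂ) ∈ ball (0:ℂ) 1 := by simp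
  have hlam1 : 1 ≤ lam := by rw [← hlam0]; exact hlamf 0 h0mem
  have hM1 : 1 ≤ M := by rw [hMdef]; nlinarith
  have hM0 : (0:ℝ) < M := by linarith
  set ρ₁ := 1 / (1 + M) with hρ₁def
  have hρ₁0 : 0 < ρ₁ := by rw [hρ₁def]; positivity
  have hρ₁1 : ρ₁ < 1 := by rw [hρ₁def, div_lt_one (by linarith)]; linarith
  have hMρ₁ : M * ρ₁ = 1 - ρ₁ := by rw [hρ₁def]; field_simp; ring
  have hsp' : ∀ z ∈ ball (0:ℂ) 1, ‖deriv g z‖ < ‖deriv h z‖ := by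
    intro z hz
    have h1 := hsp z hz
    nlinarith [norm_nonneg (deriv h z), norm_nonneg (deriv g z)]
  have hMbound : ∀ z ∈ ball (0:ℂ) 1, ‖deriv h z‖ + ‖deriv g z‖ ≤ M := by
    intro z hz
    calc ‖deriv h z‖ + ‖deriv g z‖
        ≤ K * |‖deriv h z‖ - ‖deriv g z‖| := hqr z hz
      _ ≤ K * lam := mul_le_mul_of_nonneg_left (hlamf z hz) hK0.le
  have hab : 1 ≤ ‖deriv h 0‖ - ‖deriv g 0‖ := by
    have h1 := hsp' 0 h0mem
    rw [_root_.abs_of_pos (by linarith)] at hlam0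
    linarith
  have hball1 : ball (0:ℂ) ρ₁ ⊆ ball (0:ℂ) 1 := ball_subset_ball hρ₁1.le
  constructor
  · -- injectivity
    intro z₁ hz₁ z₂ hz₂ hfeq
    by_contra hne
    have h₁b : z₁ ∈ ball (0:ℂ) 1 := hball1 hz₁
    have h₂b : z₂ ∈ ball (0:ℂ) 1 := hball1 hz₂
    have hcore := core_est hf hh hg hMbound hab h₁b h₂b
    rw [hfeq, sub_self, norm_zero] at hcore
    have hr1 : max ‖z₁‖ ‖z₂‖ < ρ₁ :=
      max_lt (mem_ball_zero_iff.mp hz₁) (mem_ball_zero_iff.mp hz₂)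
    have hr0 : 0 ≤ max ‖z₁‖ ‖z₂‖ := le_trans (norm_nonneg z₁) (le_max_left _ _)
    have hrlt1 : max ‖z₁‖ ‖z₂‖ < 1 := lt_trans hr1 hρ₁1
    have hIle : (∫ t in (0:ℝ)..1,
          M * ‖z₁ + ↑t * (z₂ - z₁)‖ / (1 - ‖z₁ + ↑t * (z₂ - z₁)‖))
        ≤ M * (max ‖z₁‖ ‖z₂‖) / (1 - max ‖z₁‖ ‖z₂‖) := by
      calc (∫ t in (0:ℝ)..1,
            M * ‖z₁ + ↑t * (z₂ - z₁)‖ / (1 - ‖z₁ + ↑t * (z₂ - z₁)‖))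
          ≤ ∫ _t in (0:ℝ)..1, M * (max ‖z₁‖ ‖z₂‖) / (1 - max ‖z₁‖ ‖z₂‖) := by
            apply intervalIntegral.integral_mono_on zero_le_one
              (int_bnd_integrable h₁b h₂b M) intervalIntegrable_const
            intro t ht
            have hle : ‖z₁ + ↑t * (z₂ - z₁)‖ ≤ max ‖z₁‖ ‖z₂‖ := seg_norm_le ht
            have hlt : ‖z₁ + ↑t * (z₂ - z₁)‖ < 1 := lt_of_le_of_lt hle hrlt1
            rw [div_le_div_iff₀ (by linarith) (by linarith)]
            nlinarith [norm_nonneg (z₁ + ↑t * (z₂ - z₁))]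
        _ = M * (max ‖z₁‖ ‖z₂‖) / (1 - max ‖z₁‖ ‖z₂‖) := by simp
    have hlt1 : M * (max ‖z₁‖ ‖z₂‖) / (1 - max ‖z₁‖ ‖z₂‖) < 1 := by
      rw [div_lt_one (by linarith)]
      have := (lt_div_iff₀ (by linarith : (0:ℝ) < 1 + M)).mp (hρ₁def ▸ hr1)
      nlinarith
    have hvpos : 0 < ‖z₂ - z₁‖ :=
      norm_pos_iff.mpr (sub_ne_zero_of_ne (Ne.symm hne))
    nlinarith [mul_le_mul_of_nonneg_right hIle (norm_nonneg (z₂ - z₁))]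
  · -- covering
    intro w hw
    rw [mem_ball_zero_iff] at hw
    set R : ℝ → ℝ := fun ρ => ρ + M * (ρ + Real.log (1 - ρ)) with hRdef
    have hwR : ‖w‖ < R ρ₁ := by
      rw [hRdef]
      simp only []
      rw [← hMρ₁]
      exact hw
    have hRcont : ContinuousAt R ρ₁ := by
      rw [hRdef]
      apply ContinuousAt.add continuousAt_id
      apply ContinuousAt.mul continuousAt_const
      apply ContinuousAt.add continuousAt_id
      exact (Real.continuousAt_log (by linarith)).comp
        (continuousAt_const.sub continuousAt_id)
    have hnb : (𝓝[Set.Ioo (0:ℝ) ρ₁] ρ₁).NeBot := right_nhdsWithin_Ioo_neBot hρ₁0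
    have hev : ∀ᶠ ρ in 𝓝[Set.Ioo (0:ℝ) ρ₁] ρ₁, ‖w‖ < R ρ ∧ ρ ∈ Set.Ioo (0:ℝ) ρ₁ := by
      have h1 : ∀ᶠ ρ in 𝓝 ρ₁, ‖w‖ < R ρ := hRcont (Ioi_mem_nhds hwR)
      exact (h1.filter_mono nhdsWithin_le_nhds).and eventually_mem_nhdsWithin
    obtain ⟨ρ, hwRρ, hρ0, hρlt⟩ := hev.exists
    have hρ1 : ρ < 1 := lt_trans hρlt hρ₁1
    have hρball : ball (0:ℂ) ρ ⊆ ball (0:ℂ) 1 := ball_subset_ball hρ1.le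
    have hclosedsub : closedBall (0:ℂ) ρ ⊆ ball (0:ℂ) 1 := closedBall_subset_ball hρ1
    have huopen : IsOpen (f '' ball (0:ℂ) ρ) := by
      rw [isOpen_iff_mem_nhds]
      rintro x ⟨z, hzρ, rfl⟩
      have hmap := map_nhds_eq_harm hf hh hg hsp' (hρball hzρ)
      rw [← hmap]
      exact Filter.image_mem_map (isOpen_ball.mem_nhds hzρ)
    have hfc : ContinuousOn f (closedBall (0:ℂ) ρ) := by
      apply ContinuousOn.congr
        (f := fun z => h z + (starRingEnd ℂ) (g z)) (s := closedBall (0:ℂ) ρ)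
      · exact (hh.continuousOn.mono hclosedsub).add
          (Complex.conjCLE.continuous.comp_continuousOn (hg.continuousOn.mono hclosedsub))
      · intro z hz
        exact hf z (hclosedsub hz)
    have hKcomp : IsCompact (f '' closedBall (0:ℂ) ρ) :=
      (isCompact_closedBall (0:ℂ) ρ).image_of_continuousOn hfc
    have hvopen : IsOpen (ball (0:ℂ) (R ρ) \ f '' closedBall (0:ℂ) ρ) :=
      isOpen_ball.sdiff hKcomp.isClosed
    have hboundary : ∀ z : ℂ, ‖z‖ = ρ → R ρ ≤ ‖f z‖ := by
      intro z hz
      have hb := ray_bound hf hh hg hMbound hab hρ0 hρ1 hz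
      rw [hf0, sub_zero] at hb
      exact hb
    have hcover : ball (0:ℂ) (R ρ)
        ⊆ (f '' ball (0:ℂ) ρ) ∪ (ball (0:ℂ) (R ρ) \ f '' closedBall (0:ℂ) ρ) := by
      intro x hx
      by_cases hxm : x ∈ f '' closedBall (0:ℂ) ρ
      · obtain ⟨z, hzc, rfl⟩ := hxm
        rcases lt_or_eq_of_le (mem_closedBall_zero_iff.mp hzc) with hlt | heq
        · exact Or.inl ⟨z, mem_ball_zero_iff.mpr hlt, rfl⟩
        · exfalso
          have hb := hboundary z heq
          have hxS := mem_ball_zero_iff.mp hx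
          linarith
      · exact Or.inr ⟨hx, hxm⟩
    have hdisj : Disjoint (f '' ball (0:ℂ) ρ)
        (ball (0:ℂ) (R ρ) \ f '' closedBall (0:ℂ) ρ) := by
      rw [Set.disjoint_left]
      rintro x hxu ⟨_, hxnot⟩
      exact hxnot ((Set.image_mono ball_subset_closedBall) hxu)
    have hSne : (ball (0:ℂ) (R ρ) ∩ (f '' ball (0:ℂ) ρ)).Nonempty := by
      refine ⟨0, mem_ball_zero_iff.mpr ?_, ⟨0, mem_ball_zero_iff.mpr ?_, hf0⟩⟩
      · simpa using lt_of_le_of_lt (norm_nonneg w) hwRρ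
      · simpa using hρ0
    have hSsub : ball (0:ℂ) (R ρ) ⊆ f '' ball (0:ℂ) ρ :=
      ((convex_ball (0:ℂ) (R ρ)).isPreconnected).subset_left_of_subset_union
        huopen hvopen hdisj hcover hSne
    obtain ⟨z, hzρ, hzw⟩ := hSsub (mem_ball_zero_iff.mpr hwRρ)
    exact ⟨z, ball_subset_ball hρlt.le hzρ, hzw⟩
end

section
/- Let K ≥ 1, K' ≥ 0 and λ > 0. Let f = h + conj(g) be a sense-preserving (K,K')-elliptic harmonic mapping on the unit disc 𝔻 with f(0) = 0, λ_f(0) = 1, and λ_f(z) ≤ λ for all z ∈ 𝔻. Set ρ₁ = 1/(1 + Kλ + √K'). Then for every z with |z| = ρ₁, |f(z)| ≥ ρ₁ + (Kλ + √K')(ρ₁ + ln(1 − ρ₁)). -/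
open Complex Metric

lemma lemA {φ : ℂ → ℂ} {c : ℝ} (hφ : DifferentiableOn ℂ φ (ball (0:ℂ) 1))
    (hb : ∀ w ∈ ball (0:ℂ) 1, ‖φ w‖ ≤ c)
    {w : ℂ} (hw : ‖w‖ < 1) :
    ‖φ w - φ 0‖ ≤ c * ‖w‖ / (1 - ‖w‖) := by
  have hw0 : (0:ℝ) ≤ ‖w‖ := norm_nonneg w
  have hc0 : 0 ≤ c := le_trans (norm_nonneg _) (hb 0 (by simp))
  -- step 2 : bound for each radius r
  have key : ∀ r : ℝ, ‖w‖ < r → r < 1 →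
      ‖φ w - φ 0‖ ≤ c * (‖w‖ / r) / (1 - ‖w‖ / r) := by
    intro r hr1 hr2
    have hrpos : 0 < r := lt_of_le_of_lt hw0 hr1
    set R : NNReal := ⟨r, hrpos.le⟩ with hR
    have hRr : (R : ℝ) = r := rfl
    have hsub : closedBall (0:ℂ) R ⊆ ball (0:ℂ) 1 := by
      rw [hRr]; exact closedBall_subset_ball hr2
    have hd : DifferentiableOn ℂ φ (closedBall (0:ℂ) R) := hφ.mono hsub
    have hps : HasFPowerSeriesOnBall φ (cauchyPowerSeries φ 0 R) 0 R :=
      hd.hasFPowerSeriesOnBall (by exact_mod_cast hrpos)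
    set p := cauchyPowerSeries φ 0 R with hp
    -- coefficient bound
    have hcoeff : ∀ n : ℕ, ‖p.coeff n‖ ≤ c / r ^ n := by
      intro n
      have h1 : ‖p n‖ ≤ ((2 * Real.pi)⁻¹ * ∫ θ : ℝ in (0)..2 * Real.pi,
          ‖φ (circleMap 0 R θ)‖) * |(R:ℝ)|⁻¹ ^ n := norm_cauchyPowerSeries_le φ 0 R n
      have hint : (∫ θ : ℝ in (0)..2 * Real.pi, ‖φ (circleMap 0 R θ)‖)
          ≤ ∫ θ : ℝ in (0)..2 * Real.pi, c := by
        apply intervalIntegral.integral_mono_on Real.two_pi_pos.le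
        · apply ContinuousOn.intervalIntegrable
          apply ContinuousOn.norm
          apply hφ.continuousOn.comp (continuous_circleMap 0 R).continuousOn
          intro θ _
          have : ‖circleMap 0 R θ‖ = r := by
            simp [norm_circleMap_zero, _root_.abs_of_nonneg hrpos.le, hRr]
          simp only [mem_ball_zero_iff, this]
          exact hr2
        · exact intervalIntegrable_const
        · intro θ _
          apply hb
          have : ‖circleMap 0 R θ‖ = r := by
            simp [norm_circleMap_zero, _root_.abs_of_nonneg hrpos.le, hRr]
          simp only [mem_ball_zero_iff, this]
          exact hr2
      have h2 : ((2 * Real.pi)⁻¹ * ∫ θ : ℝ in (0)..2 * Real.pi,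
          ‖φ (circleMap 0 R θ)‖) ≤ c := by
        rw [intervalIntegral.integral_const] at hint
        have h2π : (0:ℝ) < 2 * Real.pi := Real.two_pi_pos
        calc (2 * Real.pi)⁻¹ * ∫ θ : ℝ in (0)..2 * Real.pi, ‖φ (circleMap 0 R θ)‖
            ≤ (2 * Real.pi)⁻¹ * ((2 * Real.pi - 0) • c) := by
              apply mul_le_mul_of_nonneg_left hint (by positivity)
          _ = c := by rw [sub_zero, smul_eq_mul]; field_simp
      rw [← FormalMultilinearSeries.norm_apply_eq_norm_coef]
      calc ‖p n‖ ≤ ((2 * Real.pi)⁻¹ * ∫ θ : ℝ in (0)..2 * Real.pi,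
            ‖φ (circleMap 0 R θ)‖) * |(R:ℝ)|⁻¹ ^ n := h1
        _ ≤ c * |(R:ℝ)|⁻¹ ^ n := by
            apply mul_le_mul_of_nonneg_right h2 (by positivity)
        _ = c / r ^ n := by
            rw [hRr, _root_.abs_of_nonneg hrpos.le, division_def, inv_pow]
    -- series bound
    set q : ℝ := ‖w‖ / r with hq
    have hq0 : 0 ≤ q := by positivity
    have hq1 : q < 1 := by rw [hq, div_lt_one hrpos]; linarith
    have hwR : w ∈ Metric.eball (0:ℂ) (R : ENNReal) := by
      rw [mem_emetric_ball_zero_iff]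
      exact_mod_cast hr1
    have hsum : HasSum (fun n : ℕ => w ^ n • p.coeff n) (φ w) := by
      have := hps.hasSum hwR
      simpa [FormalMultilinearSeries.apply_eq_pow_smul_coeff] using this
    have hco0 : p.coeff 0 = φ 0 := hps.coeff_zero _
    have hsum1 : HasSum (fun n : ℕ => w ^ (n+1) • p.coeff (n+1)) (φ w - φ 0) :=
      (hasSum_nat_add_iff (f := fun n : ℕ => w ^ n • p.coeff n) 1).mpr
        (by simpa [Finset.sum_range_one, hco0, sub_add_cancel] using hsum)
    have hmaj : ∀ n : ℕ, ‖w ^ (n+1) • p.coeff (n+1)‖ ≤ (c * q) * q ^ n := by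
      intro n
      rw [norm_smul, norm_pow]
      calc ‖w‖ ^ (n+1) * ‖p.coeff (n+1)‖ ≤ ‖w‖ ^ (n+1) * (c / r ^ (n+1)) := by
            apply mul_le_mul_of_nonneg_left (hcoeff (n+1)) (by positivity)
        _ = c * q ^ (n+1) := by rw [hq, div_pow]; field_simp
        _ = (c * q) * q ^ n := by rw [pow_succ]; ring
    have hsummaj : Summable (fun n : ℕ => (c * q) * q ^ n) :=
      (summable_geometric_of_lt_one hq0 hq1).mul_left _
    have hsumnorm : Summable (fun n : ℕ => ‖w ^ (n+1) • p.coeff (n+1)‖) :=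
      Summable.of_nonneg_of_le (fun n => norm_nonneg _) hmaj hsummaj
    calc ‖φ w - φ 0‖ = ‖∑' n : ℕ, w ^ (n+1) • p.coeff (n+1)‖ := by rw [hsum1.tsum_eq]
      _ ≤ ∑' n : ℕ, ‖w ^ (n+1) • p.coeff (n+1)‖ := norm_tsum_le_tsum_norm hsumnorm
      _ ≤ ∑' n : ℕ, (c * q) * q ^ n := Summable.tsum_le_tsum hmaj hsumnorm hsummaj
      _ = (c * q) * (1 - q)⁻¹ := by
          rw [tsum_mul_left, tsum_geometric_of_lt_one hq0 hq1]
      _ = c * q / (1 - q) := by rw [div_eq_mul_inv, mul_assoc]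
  -- limit r → 1⁻
  have hne : (1:ℝ) - ‖w‖ / 1 ≠ 0 := by rw [div_one]; linarith
  have hcont : ContinuousAt (fun r : ℝ => c * (‖w‖ / r) / (1 - ‖w‖ / r)) 1 :=
    ContinuousAt.div
      (continuousAt_const.mul (continuousAt_const.div continuousAt_id one_ne_zero))
      (continuousAt_const.sub (continuousAt_const.div continuousAt_id one_ne_zero)) hne
  haveI : Filter.NeBot (nhdsWithin (1:ℝ) (Set.Ioo ‖w‖ 1)) := right_nhdsWithin_Ioo_neBot hw
  have htend : Filter.Tendsto (fun r : ℝ => c * (‖w‖ / r) / (1 - ‖w‖ / r))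
      (nhdsWithin 1 (Set.Ioo ‖w‖ 1)) (nhds (c * ‖w‖ / (1 - ‖w‖))) := by
    have h := hcont.continuousWithinAt (s := Set.Ioo ‖w‖ 1)
    unfold ContinuousWithinAt at h
    simpa using h
  apply ge_of_tendsto htend
  filter_upwards [self_mem_nhdsWithin] with r hr
  exact key r hr.1 hr.2


lemma lemB {ψ : ℂ → ℂ} {c : ℝ} (hψ : DifferentiableOn ℂ ψ (ball (0:ℂ) 1))
    (hb : ∀ w ∈ ball (0:ℂ) 1, ‖deriv ψ w‖ ≤ c)
    {z : ℂ} (hz : ‖z‖ < 1) :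
    ‖ψ z - ψ 0 - deriv ψ 0 * z‖ ≤ c * (-‖z‖ - Real.log (1 - ‖z‖)) := by
  have hρ0 : 0 ≤ ‖z‖ := norm_nonneg z
  have hc0 : 0 ≤ c := le_trans (norm_nonneg _) (hb 0 (by simp))
  have hd' : DifferentiableOn ℂ (deriv ψ) (ball (0:ℂ) 1) :=
    ((hψ.analyticOnNhd isOpen_ball).deriv).differentiableOn
  have hcont : ContinuousOn (deriv ψ) (ball (0:ℂ) 1) := hd'.continuousOn
  have hmem : ∀ t : ℝ, t ∈ Set.Icc (0:ℝ) 1 → (t : ℂ) * z ∈ ball (0:ℂ) 1 := by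
    intro t ht
    rw [mem_ball_zero_iff, norm_mul, Complex.norm_real, Real.norm_eq_abs,
      _root_.abs_of_nonneg ht.1]
    calc t * ‖z‖ ≤ 1 * ‖z‖ := mul_le_mul_of_nonneg_right ht.2 hρ0
      _ < 1 := by rwa [one_mul]
  have hderiv : ∀ t ∈ Set.uIcc (0:ℝ) 1,
      HasDerivAt (fun s : ℝ => ψ ((s:ℂ) * z)) (deriv ψ ((t:ℂ)*z) * z) t := by
    intro t ht
    rw [Set.uIcc_of_le zero_le_one] at ht
    have hmemt := hmem t ht
    have h2 : HasDerivAt ψ (deriv ψ ((t:ℂ)*z)) ((t:ℂ)*z) :=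
      (hψ.differentiableAt (isOpen_ball.mem_nhds hmemt)).hasDerivAt
    have h3 : HasDerivAt (fun y : ℂ => y * z) z (t:ℂ) := by
      simpa using (hasDerivAt_id ((t:ℂ))).mul_const z
    exact (h2.comp (t:ℂ) h3).comp_ofReal
  have hcont2 : ContinuousOn (fun t : ℝ => deriv ψ ((t:ℂ)*z) * z) (Set.uIcc (0:ℝ) 1) := by
    apply ContinuousOn.mul _ continuousOn_const
    apply hcont.comp ((Complex.continuous_ofReal.mul continuous_const).continuousOn)
    intro t ht
    rw [Set.uIcc_of_le zero_le_one] at ht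
    exact hmem t ht
  have hFTC : ∫ t in (0:ℝ)..1, deriv ψ ((t:ℂ)*z) * z = ψ z - ψ 0 := by
    have := intervalIntegral.integral_eq_sub_of_hasDerivAt hderiv hcont2.intervalIntegrable
    simpa using this
  have heq : ∫ t in (0:ℝ)..1, (deriv ψ ((t:ℂ)*z) - deriv ψ 0) * z
      = ψ z - ψ 0 - deriv ψ 0 * z := by
    have h1 : ∀ t : ℝ, (deriv ψ ((t:ℂ)*z) - deriv ψ 0) * z
        = deriv ψ ((t:ℂ)*z) * z - deriv ψ 0 * z := fun t => by ring
    simp only [h1]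
    rw [intervalIntegral.integral_sub hcont2.intervalIntegrable intervalIntegrable_const,
      hFTC, intervalIntegral.integral_const]
    simp
  -- the majorant
  set G : ℝ → ℝ := fun t => c * (t * ‖z‖) / (1 - t * ‖z‖) * ‖z‖ with hG
  have hne : ∀ t : ℝ, t ∈ Set.uIcc (0:ℝ) 1 → (0:ℝ) < 1 - t * ‖z‖ := by
    intro t ht
    rw [Set.uIcc_of_le zero_le_one] at ht
    have : t * ‖z‖ ≤ 1 * ‖z‖ := mul_le_mul_of_nonneg_right ht.2 hρ0
    simp only [one_mul] at this
    linarith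
  have hGcont : ContinuousOn G (Set.uIcc (0:ℝ) 1) := by
    apply ContinuousOn.mul _ continuousOn_const
    apply ContinuousOn.div
    · exact (continuous_const.mul (continuous_id.mul continuous_const)).continuousOn
    · exact (continuous_const.sub (continuous_id.mul continuous_const)).continuousOn
    · intro t ht; exact ne_of_gt (hne t ht)
  -- compute the integral of G
  have hGder : ∀ t ∈ Set.uIcc (0:ℝ) 1,
      HasDerivAt (fun s : ℝ => c * (-(s * ‖z‖) - Real.log (1 - s * ‖z‖))) (G t) t := by
    intro t ht
    have hnet := hne t ht
    have hinner : HasDerivAt (fun s : ℝ => 1 - s * ‖z‖) (-(1 * ‖z‖)) t :=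
      ((hasDerivAt_id t).mul_const ‖z‖).const_sub 1
    have hlog : HasDerivAt (fun s : ℝ => Real.log (1 - s * ‖z‖))
        ((1 - t * ‖z‖)⁻¹ * -(1 * ‖z‖)) t :=
      by have := (Real.hasDerivAt_log (ne_of_gt hnet)).comp t hinner; exact this
    have hmain : HasDerivAt (fun s : ℝ => c * (-(s * ‖z‖) - Real.log (1 - s * ‖z‖)))
        (c * (-(1 * ‖z‖) - (1 - t * ‖z‖)⁻¹ * -(1 * ‖z‖))) t :=
      (((hasDerivAt_id t).mul_const ‖z‖).neg.sub hlog).const_mul c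
    have hne' : 1 - t * ‖z‖ ≠ 0 := ne_of_gt hnet
    have hkey : (1 - t * ‖z‖)⁻¹ - 1 = (t * ‖z‖) / (1 - t * ‖z‖) := by
      rw [eq_div_iff hne', sub_mul, inv_mul_cancel₀ hne']; ring
    have heq2 : c * (-(1 * ‖z‖) - (1 - t * ‖z‖)⁻¹ * -(1 * ‖z‖)) = G t := by
      rw [hG]
      have h5 : c * (-(1 * ‖z‖) - (1 - t * ‖z‖)⁻¹ * -(1 * ‖z‖))
          = c * ‖z‖ * ((1 - t * ‖z‖)⁻¹ - 1) := by ring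
      rw [h5, hkey]
      ring
    exact heq2 ▸ hmain
  have hGint : ∫ t in (0:ℝ)..1, G t = c * (-‖z‖ - Real.log (1 - ‖z‖)) := by
    rw [intervalIntegral.integral_eq_sub_of_hasDerivAt hGder hGcont.intervalIntegrable]
    simp [Real.log_one]
  -- pointwise bound and conclusion
  have hbound : ∀ᵐ (t : ℝ) ∂MeasureTheory.volume.restrict (Set.uIoc (0:ℝ) 1),
      ‖(deriv ψ ((t:ℂ)*z) - deriv ψ 0) * z‖ ≤ G t := by
    refine (MeasureTheory.ae_restrict_mem measurableSet_uIoc).mono fun t ht => ?_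
    rw [Set.uIoc_of_le zero_le_one] at ht
    have ht' : t ∈ Set.Icc (0:ℝ) 1 := ⟨ht.1.le, ht.2⟩
    have htz : ‖(t:ℂ) * z‖ = t * ‖z‖ := by
      rw [norm_mul, Complex.norm_real, Real.norm_eq_abs, _root_.abs_of_nonneg ht.1.le]
    have h1 : ‖deriv ψ ((t:ℂ)*z) - deriv ψ 0‖ ≤ c * ‖(t:ℂ)*z‖ / (1 - ‖(t:ℂ)*z‖) := by
      have hw : ‖(t:ℂ)*z‖ < 1 := by
        have := hmem t ht'
        rwa [mem_ball_zero_iff] at this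
      have := lemA hd' hb hw
      simpa using this
    rw [norm_mul, hG]
    calc ‖deriv ψ ((t:ℂ)*z) - deriv ψ 0‖ * ‖z‖
        ≤ (c * ‖(t:ℂ)*z‖ / (1 - ‖(t:ℂ)*z‖)) * ‖z‖ := mul_le_mul_of_nonneg_right h1 hρ0
      _ = c * (t * ‖z‖) / (1 - t * ‖z‖) * ‖z‖ := by rw [htz]
  have hGpos : 0 ≤ ∫ t in (0:ℝ)..1, G t := by
    rw [hGint]
    have : Real.log (1 - ‖z‖) ≤ (1 - ‖z‖) - 1 :=
      Real.log_le_sub_one_of_pos (by linarith)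
    nlinarith
  calc ‖ψ z - ψ 0 - deriv ψ 0 * z‖
      = ‖∫ t in (0:ℝ)..1, (deriv ψ ((t:ℂ)*z) - deriv ψ 0) * z‖ := by rw [heq]
    _ ≤ |∫ t in (0:ℝ)..1, G t| :=
        intervalIntegral.norm_integral_le_abs_of_norm_le hbound hGcont.intervalIntegrable
    _ = ∫ t in (0:ℝ)..1, G t := _root_.abs_of_nonneg hGpos
    _ = c * (-‖z‖ - Real.log (1 - ‖z‖)) := hGint


lemma abs_add_lower (u w : ℂ) : ‖u‖ - ‖w‖ ≤ ‖u + w‖ := by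
  have h := norm_sub_norm_le u (-w)
  simpa [sub_neg_eq_add] using h

lemma align (u v : ℂ) : ∃ e : ℂ, ‖e‖ = 1 ∧
    ‖u + e * v‖ = ‖u‖ + ‖v‖ := by
  rcases eq_or_ne v 0 with rfl | hv
  · exact ⟨1, by simp, by simp⟩
  rcases eq_or_ne u 0 with rfl | hu
  · exact ⟨1, by simp, by simp⟩
  have ha : 0 < ‖u‖ := norm_pos_iff.mpr hu
  have hb : 0 < ‖v‖ := norm_pos_iff.mpr hv
  have h1 : ((‖u‖ : ℂ)) ≠ 0 := by
    simpa using ha.ne'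
  have h2 : ((‖v‖ : ℂ)) ≠ 0 := by
    simpa using hb.ne'
  refine ⟨u * (starRingEnd ℂ) v / (↑(‖u‖) * ↑(‖v‖)), ?_, ?_⟩
  · rw [norm_div, norm_mul, norm_mul, Complex.norm_conj, Complex.norm_real,
      Complex.norm_real, norm_norm, norm_norm,
      div_self (mul_pos ha hb).ne']
  · have hvv : (starRingEnd ℂ) v * v = ((‖v‖ : ℂ)) ^ 2 := by
      rw [mul_comm, Complex.mul_conj]
      norm_cast
      rw [Complex.sq_norm]
    have he : u + (u * (starRingEnd ℂ) v / (↑(‖u‖) * ↑(‖v‖))) * v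
        = u * ((↑(‖u‖) + ↑(‖v‖)) / ↑(‖u‖)) := by
      field_simp
      linear_combination hvv
    rw [he, norm_mul, norm_div]
    have h3 : ‖(‖u‖ : ℂ) + (‖v‖ : ℂ)‖
        = ‖u‖ + ‖v‖ := by
      rw [← Complex.ofReal_add, Complex.norm_real, Real.norm_eq_abs]
      exact _root_.abs_of_nonneg (by positivity)
    rw [h3, Complex.norm_real, norm_norm]
    field_simp

/-- Lower bound for |f(z)| on the circle |z| = ρ₁ for (K,K')-elliptic harmonic
mappings: |f(z)| ≥ ρ₁ + (Kλ + √K')(ρ₁ + ln(1 − ρ₁)). -/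
theorem modulus_lower_bound_elliptic
    (K K' lam : ℝ) (hK : 1 ≤ K) (hK' : 0 ≤ K') (hlam : 0 < lam)
    (h g f : ℂ → ℂ)
    (hf : ∀ z ∈ ball (0:ℂ) 1, f z = h z + (starRingEnd ℂ) (g z))
    (hh : DifferentiableOn ℂ h (ball (0:ℂ) 1))
    (hg : DifferentiableOn ℂ g (ball (0:ℂ) 1))
    (hsp : ∀ z ∈ ball (0:ℂ) 1,
      0 < ‖deriv h z‖ ^ 2 - ‖deriv g z‖ ^ 2)
    (hell : ∀ z ∈ ball (0:ℂ) 1,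
      ‖deriv g z‖ ≤ ((K - 1) / (K + 1)) * ‖deriv h z‖
        + Real.sqrt K' / (K + 1))
    (hf0 : f 0 = 0)
    (hlam0 : |‖deriv h 0‖ - ‖deriv g 0‖| = 1)
    (hlamf : ∀ z ∈ ball (0:ℂ) 1,
      |‖deriv h z‖ - ‖deriv g z‖| ≤ lam) :
    ∀ z : ℂ, ‖z‖ = 1 / (1 + K * lam + Real.sqrt K') →
      1 / (1 + K * lam + Real.sqrt K')
          + (K * lam + Real.sqrt K')
            * (1 / (1 + K * lam + Real.sqrt K')
              + Real.log (1 - 1 / (1 + K * lam + Real.sqrt K')))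
        ≤ ‖f z‖ := by
  intro z hz
  set s := Real.sqrt K' with hs
  have hs0 : 0 ≤ s := Real.sqrt_nonneg _
  set c := K * lam + s with hcdef
  have hKlam : 0 < K * lam := mul_pos (lt_of_lt_of_le one_pos hK) hlam
  have hc : 0 < c := by rw [hcdef]; linarith
  set ρ := 1 / (1 + K * lam + s) with hρdef
  have h1c : 1 + K * lam + s = 1 + c := by rw [hcdef]; ring
  have hρpos : 0 < ρ := by rw [hρdef, h1c]; positivity
  have hρlt1 : ρ < 1 := by
    rw [hρdef, h1c, div_lt_one (by linarith)]; linarith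
  have hzball : z ∈ ball (0:ℂ) 1 := by
    rw [mem_ball_zero_iff, hz]; exact hρlt1
  have h0mem : (0:ℂ) ∈ ball (0:ℂ) 1 := by simp
  -- derivative sum bound
  have hbound : ∀ w ∈ ball (0:ℂ) 1,
      ‖deriv h w‖ + ‖deriv g w‖ ≤ c := by
    intro w hw
    set a := ‖deriv h w‖ with hadef
    set b := ‖deriv g w‖ with hbdef
    have ha0 : 0 ≤ a := norm_nonneg _
    have hb0 : 0 ≤ b := norm_nonneg _
    have hba : b < a := by nlinarith [hsp w hw]
    have hlam' : a - b ≤ lam := by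
      have h5 := hlamf w hw
      rwa [_root_.abs_of_pos (by linarith : 0 < a - b)] at h5
    have hK1 : (0:ℝ) < K + 1 := by linarith
    have hell' := hell w hw
    rw [div_mul_eq_mul_div, ← add_div, le_div_iff₀ hK1] at hell'
    have h4 : (K - 1) * a ≤ (K - 1) * (b + lam) :=
      mul_le_mul_of_nonneg_left (by linarith) (by linarith)
    rw [hcdef]
    nlinarith [hell', h4]
  -- at the origin
  have hba0 : ‖deriv g 0‖ < ‖deriv h 0‖ := by
    nlinarith [hsp 0 h0mem, norm_nonneg (deriv g 0), norm_nonneg (deriv h 0)]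
  have hone : ‖deriv h 0‖ - ‖deriv g 0‖ = 1 := by
    rwa [_root_.abs_of_pos (by linarith)] at hlam0
  -- alignment
  obtain ⟨e, he1, he2⟩ := align (h z - h 0 - deriv h 0 * z) (g z - g 0 - deriv g 0 * z)
  set ψ : ℂ → ℂ := fun w => h w + e * g w with hψdef
  have hψdiff : DifferentiableOn ℂ ψ (ball (0:ℂ) 1) := by
    rw [hψdef]; exact hh.add (hg.const_mul e)
  have hψd : ∀ w ∈ ball (0:ℂ) 1, deriv ψ w = deriv h w + e * deriv g w := by
    intro w hw
    have hha := hh.differentiableAt (isOpen_ball.mem_nhds hw)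
    have hga := hg.differentiableAt (isOpen_ball.mem_nhds hw)
    rw [hψdef]
    rw [deriv_fun_add hha (hga.const_mul e), deriv_const_mul e hga]
  have hbψ : ∀ w ∈ ball (0:ℂ) 1, ‖deriv ψ w‖ ≤ c := by
    intro w hw
    rw [hψd w hw]
    calc ‖deriv h w + e * deriv g w‖
        ≤ ‖deriv h w‖ + ‖e * deriv g w‖ := norm_add_le _ _
      _ = ‖deriv h w‖ + ‖deriv g w‖ := by rw [norm_mul, he1, one_mul]
      _ ≤ c := hbound w hw
  have hzn : ‖z‖ < 1 := by rw [hz]; exact hρlt1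
  have hB := lemB hψdiff hbψ hzn
  have hψsimp : ψ z - ψ 0 - deriv ψ 0 * z
      = (h z - h 0 - deriv h 0 * z) + e * (g z - g 0 - deriv g 0 * z) := by
    rw [hψd 0 h0mem, hψdef]; ring
  have hznρ : ‖z‖ = ρ := by rw [hz]
  rw [hψsimp, hznρ, he2] at hB
  -- decomposition of f z
  have hf00 : h 0 + (starRingEnd ℂ) (g 0) = 0 := by rw [← hf 0 h0mem]; exact hf0
  have hdecomp : f z = (deriv h 0 * z + (starRingEnd ℂ) (deriv g 0 * z))
      + ((h z - h 0 - deriv h 0 * z) + (starRingEnd ℂ) (g z - g 0 - deriv g 0 * z)) := by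
    have hkey : (deriv h 0 * z + (starRingEnd ℂ) (deriv g 0 * z))
        + ((h z - h 0 - deriv h 0 * z) + (starRingEnd ℂ) (g z - g 0 - deriv g 0 * z))
        = h z + (starRingEnd ℂ) (g z) - (h 0 + (starRingEnd ℂ) (g 0)) := by
      simp only [map_sub]
      ring
    rw [hf z hzball, hkey, hf00, sub_zero]
  -- lower bound on the linear part
  have hA : ρ ≤ ‖deriv h 0 * z + (starRingEnd ℂ) (deriv g 0 * z)‖ := by
    have h5 := abs_add_lower (deriv h 0 * z) ((starRingEnd ℂ) (deriv g 0 * z))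
    rw [Complex.norm_conj, norm_mul, norm_mul, hz] at h5
    calc ρ = ‖deriv h 0‖ * ρ - ‖deriv g 0‖ * ρ := by
          rw [← sub_mul, hone, one_mul]
      _ ≤ _ := by rw [hρdef] at h5 ⊢; exact h5
  -- remainder bound
  have hR : ‖(h z - h 0 - deriv h 0 * z)
        + (starRingEnd ℂ) (g z - g 0 - deriv g 0 * z)‖
      ≤ ‖h z - h 0 - deriv h 0 * z‖
        + ‖g z - g 0 - deriv g 0 * z‖ := by
    calc ‖(h z - h 0 - deriv h 0 * z)
          + (starRingEnd ℂ) (g z - g 0 - deriv g 0 * z)‖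
        ≤ ‖h z - h 0 - deriv h 0 * z‖
          + ‖(starRingEnd ℂ) (g z - g 0 - deriv g 0 * z)‖ :=
          norm_add_le _ _
      _ = _ := by rw [Complex.norm_conj]
  -- conclusion
  have hfinal := abs_add_lower (deriv h 0 * z + (starRingEnd ℂ) (deriv g 0 * z))
    ((h z - h 0 - deriv h 0 * z) + (starRingEnd ℂ) (g z - g 0 - deriv g 0 * z))
  rw [← hdecomp] at hfinal
  have hring : c * (-ρ - Real.log (1 - ρ)) = -(c * (ρ + Real.log (1 - ρ))) := by ring
  linarith [hB, hA, hR, hfinal]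
end

section
/- Let K ≥ 1 and λ > 0. Let f = h + conj(g) be a sense-preserving K-quasiregular harmonic mapping on the unit disc 𝔻 with f(0) = 0, J_f(0) = 1, and λ_f(z) ≤ λ for all z ∈ 𝔻. Set ρ = 1/(1 + λK^{3/2}). Then for every z with |z| = ρ, |f(z)| ≥ ρ/√K + Kλ(ρ + ln(1 − ρ)). -/
open Complex Metric Filter Set

/-- Cauchy-estimate-based Schwarz-type bound: if `F` is analytic and bounded by `M`
on the unit disc, then `‖F w - F 0‖ ≤ M‖w‖/(1-‖w‖)`. -/
lemma schwarz_diff_bound {F : ℂ → ℂ} {M : ℝ}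
    (hF : DifferentiableOn ℂ F (ball (0:ℂ) 1))
    (hM : ∀ z ∈ ball (0:ℂ) 1, ‖F z‖ ≤ M)
    {w : ℂ} (hw : ‖w‖ < 1) :
    ‖F w - F 0‖ ≤ M * ‖w‖ / (1 - ‖w‖) := by
  set s := ‖w‖ with hs
  have hs0 : 0 ≤ s := norm_nonneg w
  have hM0 : 0 ≤ M := le_trans (norm_nonneg _) (hM 0 (by simp))
  have key : ∀ r : ℝ, s < r → r < 1 → ‖F w - F 0‖ ≤ M * s / (r - s) := by
    intro r hsr hr1
    have hr0 : 0 < r := lt_of_le_of_lt hs0 hsr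
    set R : NNReal := ⟨r, hr0.le⟩ with hR
    have hRr : (R : ℝ) = r := rfl
    have hsub : closedBall (0:ℂ) r ⊆ ball (0:ℂ) 1 := closedBall_subset_ball hr1
    have hd : DifferentiableOn ℂ F (closedBall (0:ℂ) (R:ℝ)) := hF.mono hsub
    have hp : HasFPowerSeriesOnBall F (cauchyPowerSeries F 0 (R:ℝ)) 0 R :=
      hd.hasFPowerSeriesOnBall (by exact_mod_cast hr0)
    -- coefficient bound
    have hcoef : ∀ n : ℕ, ‖cauchyPowerSeries F 0 (R:ℝ) n‖ ≤ M * (r⁻¹) ^ n := by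
      intro n
      refine (norm_cauchyPowerSeries_le F 0 (R:ℝ) n).trans ?_
      have hint : ∫ θ : ℝ in (0)..2 * Real.pi, ‖F (circleMap 0 (R:ℝ) θ)‖ ≤ 2 * Real.pi * M := by
        have hcont : ContinuousOn (fun θ : ℝ => ‖F (circleMap 0 (R:ℝ) θ)‖)
            (Set.uIcc 0 (2 * Real.pi)) := by
          apply ContinuousOn.norm
          apply hF.continuousOn.comp (continuous_circleMap 0 (R:ℝ)).continuousOn
          intro θ _
          simp only [mem_ball, dist_zero_right]
          rw [norm_circleMap_zero, hRr, abs_of_pos hr0]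
          exact hr1
        have h1 : IntervalIntegrable (fun θ : ℝ => ‖F (circleMap 0 (R:ℝ) θ)‖)
            MeasureTheory.volume 0 (2 * Real.pi) := hcont.intervalIntegrable
        calc ∫ θ : ℝ in (0)..2 * Real.pi, ‖F (circleMap 0 (R:ℝ) θ)‖
            ≤ ∫ _θ : ℝ in (0)..2 * Real.pi, M := by
              apply intervalIntegral.integral_mono_on Real.two_pi_pos.le h1
                intervalIntegrable_const
              intro θ _
              apply hM
              simp only [mem_ball, dist_zero_right]
              rw [norm_circleMap_zero, hRr, abs_of_pos hr0]
              exact hr1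
          _ = 2 * Real.pi * M := by simp [mul_comm]
      have h2π : (0:ℝ) < (2 * Real.pi)⁻¹ := by positivity
      calc ((2 * Real.pi)⁻¹ * ∫ θ : ℝ in (0)..2 * Real.pi, ‖F (circleMap 0 (R:ℝ) θ)‖)
            * |(R:ℝ)|⁻¹ ^ n
          ≤ ((2 * Real.pi)⁻¹ * (2 * Real.pi * M)) * |(R:ℝ)|⁻¹ ^ n := by
            apply mul_le_mul_of_nonneg_right (mul_le_mul_of_nonneg_left hint h2π.le)
            positivity
        _ = M * (r⁻¹) ^ n := by
            rw [hRr, abs_of_pos hr0]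
            field_simp
    -- power series expansion at w
    set p := cauchyPowerSeries F 0 (R:ℝ) with hpdef
    have hwmem : w ∈ Metric.eball (0:ℂ) (R : ENNReal) := by
      rw [Metric.mem_eball, edist_zero_right]
      have : ‖w‖₊ < R := by
        rw [← NNReal.coe_lt_coe, coe_nnnorm, hRr]; exact hsr
      exact_mod_cast this
    have hsum : HasSum (fun n : ℕ => p n fun _ => w) (F w) := by
      simpa using hp.hasSum hwmem
    have h1 : HasSum (fun n : ℕ => p (n + 1) fun _ => w) (F w - F 0) := by
      have h0 : p.coeff 0 = F 0 := hp.coeff_zero _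
      have := (hasSum_nat_add_iff' (f := fun n : ℕ => p n fun _ => w) 1).mpr hsum
      simpa [h0] using this
    set q : ℝ := s / r with hq
    have hq0 : 0 ≤ q := div_nonneg hs0 hr0.le
    have hq1 : q < 1 := (div_lt_one hr0).2 hsr
    have tb : ∀ n : ℕ, ‖p (n + 1) fun _ => w‖ ≤ M * q ^ (n + 1) := by
      intro n
      calc ‖p (n + 1) fun _ => w‖
          ≤ ‖p (n + 1)‖ * ∏ _i : Fin (n + 1), ‖w‖ :=
            ContinuousMultilinearMap.le_opNorm _ _
        _ = ‖p (n + 1)‖ * s ^ (n + 1) := by simp [hs]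
        _ ≤ (M * (r⁻¹) ^ (n + 1)) * s ^ (n + 1) := by
            apply mul_le_mul_of_nonneg_right (hcoef (n + 1)) (by positivity)
        _ = M * q ^ (n + 1) := by
            rw [hq, div_pow, div_eq_mul_inv, inv_pow]; ring
    have hgeom : HasSum (fun n : ℕ => M * q ^ (n + 1)) (M * q / (1 - q)) := by
      have hgs := (hasSum_geometric_of_lt_one hq0 hq1).mul_left (M * q)
      have heq : (fun n : ℕ => M * q ^ (n + 1)) = fun n : ℕ => M * q * q ^ n := by
        funext n; ring
      rw [heq, div_eq_mul_inv]
      exact hgs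
    have hsummable : Summable (fun n : ℕ => ‖p (n + 1) fun _ => w‖) :=
      Summable.of_nonneg_of_le (fun n => norm_nonneg _) tb hgeom.summable
    have hle : ‖F w - F 0‖ ≤ M * q / (1 - q) := by
      calc ‖F w - F 0‖ = ‖∑' n : ℕ, (p (n + 1) fun _ => w)‖ := by rw [h1.tsum_eq]
        _ ≤ ∑' n : ℕ, ‖p (n + 1) fun _ => w‖ := norm_tsum_le_tsum_norm hsummable
        _ ≤ ∑' n : ℕ, M * q ^ (n + 1) := Summable.tsum_le_tsum tb hsummable hgeom.summable
        _ = M * q / (1 - q) := hgeom.tsum_eq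
    have : M * q / (1 - q) = M * s / (r - s) := by
      rw [hq]
      have hrs : r - s ≠ 0 := ne_of_gt (by linarith)
      field_simp
    rw [this] at hle
    exact hle
  -- limit r → 1⁻
  have hlim : Tendsto (fun r : ℝ => M * s / (r - s)) (nhdsWithin 1 (Iio 1))
      (nhds (M * s / (1 - s))) := by
    apply Tendsto.mono_left _ nhdsWithin_le_nhds
    apply ContinuousAt.tendsto
    apply ContinuousAt.div continuousAt_const (by fun_prop)
    simpa using sub_ne_zero_of_ne (ne_of_gt hw)
  refine ge_of_tendsto hlim ?_
  filter_upwards [Ioo_mem_nhdsLT_of_mem (right_mem_Ioc.mpr hw)] with r hr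
  exact key r hr.1 hr.2

lemma exists_unit_mul (a : ℂ) : ∃ α : ℂ, ‖α‖ = 1 ∧ α * a = (‖a‖ : ℝ) := by
  rcases eq_or_ne a 0 with rfl | ha
  · exact ⟨1, by simp, by simp⟩
  · refine ⟨(‖a‖ : ℂ) / a, ?_, by field_simp⟩
    rw [norm_div, Complex.norm_real, Real.norm_of_nonneg (norm_nonneg a),
      div_self (norm_ne_zero_iff.mpr ha)]

lemma pair_diff_bound {φ ψ : ℂ → ℂ} {M : ℝ}
    (hφ : DifferentiableOn ℂ φ (ball (0:ℂ) 1))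
    (hψ : DifferentiableOn ℂ ψ (ball (0:ℂ) 1))
    (hM : ∀ z ∈ ball (0:ℂ) 1, ‖φ z‖ + ‖ψ z‖ ≤ M)
    {w : ℂ} (hw : ‖w‖ < 1) :
    ‖φ w - φ 0‖ + ‖ψ w - ψ 0‖ ≤ M * ‖w‖ / (1 - ‖w‖) := by
  obtain ⟨α, hα1, hαa⟩ := exists_unit_mul (φ w - φ 0)
  obtain ⟨β, hβ1, hβb⟩ := exists_unit_mul (ψ w - ψ 0)
  set F : ℂ → ℂ := fun z => α * φ z + β * ψ z with hFdef
  have hFd : DifferentiableOn ℂ F (ball (0:ℂ) 1) :=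
    ((hφ.const_mul α).add (hψ.const_mul β))
  have hFM : ∀ z ∈ ball (0:ℂ) 1, ‖F z‖ ≤ M := by
    intro z hz
    calc ‖F z‖ ≤ ‖α * φ z‖ + ‖β * ψ z‖ := norm_add_le _ _
      _ = ‖φ z‖ + ‖ψ z‖ := by rw [norm_mul, norm_mul, hα1, hβ1, one_mul, one_mul]
      _ ≤ M := hM z hz
  have hkey := schwarz_diff_bound hFd hFM hw
  have hFw : F w - F 0 = ((‖φ w - φ 0‖ + ‖ψ w - ψ 0‖ : ℝ) : ℂ) := by
    have : F w - F 0 = α * (φ w - φ 0) + β * (ψ w - ψ 0) := by rw [hFdef]; ring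
    rw [this, hαa, hβb]
    push_cast
    ring
  rwa [hFw, Complex.norm_real,
    Real.norm_of_nonneg (by positivity)] at hkey

set_option maxHeartbeats 1000000 in
/-- Lower bound for |f(z)| on the circle |z| = ρ for K-quasiregular harmonic
mappings with J_f(0) = 1: |f(z)| ≥ ρ/√K + Kλ(ρ + ln(1 − ρ)). -/
theorem modulus_lower_bound_quasiregular
    (K lam : ℝ) (hK : 1 ≤ K) (hlam : 0 < lam)
    (h g f : ℂ → ℂ)
    (hf : ∀ z ∈ ball (0:ℂ) 1, f z = h z + (starRingEnd ℂ) (g z))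
    (hh : DifferentiableOn ℂ h (ball (0:ℂ) 1))
    (hg : DifferentiableOn ℂ g (ball (0:ℂ) 1))
    (hsp : ∀ z ∈ ball (0:ℂ) 1,
      0 < ‖deriv h z‖ ^ 2 - ‖deriv g z‖ ^ 2)
    (hqr : ∀ z ∈ ball (0:ℂ) 1,
      ‖deriv h z‖ + ‖deriv g z‖
        ≤ K * |‖deriv h z‖ - ‖deriv g z‖|)
    (hf0 : f 0 = 0)
    (hJ0 : ‖deriv h 0‖ ^ 2 - ‖deriv g 0‖ ^ 2 = 1)
    (hlamf : ∀ z ∈ ball (0:ℂ) 1,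
      |‖deriv h z‖ - ‖deriv g z‖| ≤ lam) :
    ∀ z : ℂ, ‖z‖ = 1 / (1 + lam * K ^ ((3:ℝ)/2)) →
      1 / (1 + lam * K ^ ((3:ℝ)/2)) / Real.sqrt K
          + K * lam * (1 / (1 + lam * K ^ ((3:ℝ)/2))
            + Real.log (1 - 1 / (1 + lam * K ^ ((3:ℝ)/2))))
        ≤ ‖f z‖ := by
  intro z hz
  have hK0 : (0:ℝ) < K := by linarith
  set x : ℝ := lam * K ^ ((3:ℝ)/2) with hxdef
  have hx : 0 < x := mul_pos hlam (Real.rpow_pos_of_pos hK0 _)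
  set ρ : ℝ := 1 / (1 + x) with hρdef
  have hρ0 : 0 < ρ := by positivity
  have hρ1 : ρ < 1 := by rw [hρdef, div_lt_one (by linarith)]; linarith
  clear_value x ρ
  have hzn : ‖z‖ = ρ := by rw [hz]
  have hzball : z ∈ ball (0:ℂ) 1 := by
    simp only [mem_ball, dist_zero_right, hzn]; exact hρ1
  have h0ball : (0:ℂ) ∈ ball (0:ℂ) 1 := by simp
  -- derivatives are analytic
  have hφd : DifferentiableOn ℂ (deriv h) (ball (0:ℂ) 1) :=
    ((hh.analyticOnNhd isOpen_ball).deriv).differentiableOn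
  have hψd : DifferentiableOn ℂ (deriv g) (ball (0:ℂ) 1) :=
    ((hg.analyticOnNhd isOpen_ball).deriv).differentiableOn
  -- Λ ≤ K λ
  have hKlam : ∀ w ∈ ball (0:ℂ) 1, ‖deriv h w‖ + ‖deriv g w‖ ≤ K * lam := by
    intro w hw
    have h1 := (hqr w hw).trans
      (mul_le_mul_of_nonneg_left (hlamf w hw) (by linarith : (0:ℝ) ≤ K))
    simpa using h1
  -- lower bound at the origin
  set Ah : ℝ := ‖deriv h 0‖ with hAh
  set Bg : ℝ := ‖deriv g 0‖ with hBg
  have hA0 : 0 ≤ Ah := norm_nonneg _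
  have hB0 : 0 ≤ Bg := norm_nonneg _
  have hd0 : 0 < Ah - Bg := by nlinarith [hJ0]
  have hqr0 := hqr 0 h0ball
  rw [abs_of_pos hd0] at hqr0
  have hdK : 1 / Real.sqrt K ≤ Ah - Bg := by
    have hd2 : 1 / K ≤ (Ah - Bg) ^ 2 := by
      rw [div_le_iff₀ hK0]; nlinarith [hJ0]
    have h1 : Real.sqrt (1 / K) ≤ Real.sqrt ((Ah - Bg) ^ 2) := Real.sqrt_le_sqrt hd2
    rw [Real.sqrt_sq hd0.le] at h1
    calc 1 / Real.sqrt K = Real.sqrt (1 / K) := by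
          rw [one_div, one_div, Real.sqrt_inv]
      _ ≤ Ah - Bg := h1
  -- the segment lies in the ball
  have hmem : ∀ t ∈ Set.uIcc (0:ℝ) 1, (t:ℂ) * z ∈ ball (0:ℂ) 1 := by
    intro t ht
    rw [Set.uIcc_of_le (by norm_num : (0:ℝ) ≤ 1)] at ht
    simp only [mem_ball, dist_zero_right, norm_mul, Complex.norm_real, Real.norm_eq_abs,
      hzn, _root_.abs_of_nonneg ht.1]
    nlinarith [ht.2]
  -- FTC setup
  set D : ℝ → ℂ := fun t => deriv h ((t:ℂ) * z) * z + star (deriv g ((t:ℂ) * z) * z) with hDdef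
  have hW : ∀ t ∈ Set.uIcc (0:ℝ) 1,
      HasDerivAt (fun s : ℝ => h ((s:ℂ) * z) + star (g ((s:ℂ) * z))) (D t) t := by
    intro t ht
    have hmt := hmem t ht
    have h2 : HasDerivAt (fun s : ℂ => s * z) z ((t:ℝ):ℂ) := by
      simpa using (hasDerivAt_id ((t:ℝ):ℂ)).mul_const z
    have hhc : HasDerivAt (fun s : ℂ => h (s * z)) (deriv h ((t:ℂ) * z) * z) ((t:ℝ):ℂ) := by
      have h1 : HasDerivAt h (deriv h ((t:ℂ) * z)) ((t:ℂ) * z) :=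
        (hh.differentiableAt (isOpen_ball.mem_nhds hmt)).hasDerivAt
      exact h1.comp ((t:ℝ):ℂ) h2
    have hgc : HasDerivAt (fun s : ℂ => g (s * z)) (deriv g ((t:ℂ) * z) * z) ((t:ℝ):ℂ) := by
      have h1 : HasDerivAt g (deriv g ((t:ℂ) * z)) ((t:ℂ) * z) :=
        (hg.differentiableAt (isOpen_ball.mem_nhds hmt)).hasDerivAt
      exact h1.comp ((t:ℝ):ℂ) h2
    exact hhc.comp_ofReal.add hgc.comp_ofReal.star
  have hDc : ContinuousOn D (Set.uIcc (0:ℝ) 1) := by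
    have hc1 : ContinuousOn (fun t : ℝ => (t:ℂ) * z) (Set.uIcc (0:ℝ) 1) :=
      Continuous.continuousOn (by continuity)
    have hφc : ContinuousOn (fun t : ℝ => deriv h ((t:ℂ) * z)) (Set.uIcc (0:ℝ) 1) :=
      hφd.continuousOn.comp hc1 hmem
    have hψc : ContinuousOn (fun t : ℝ => deriv g ((t:ℂ) * z)) (Set.uIcc (0:ℝ) 1) :=
      hψd.continuousOn.comp hc1 hmem
    exact (hφc.mul continuousOn_const).add ((hψc.mul continuousOn_const).star)
  have hInt : IntervalIntegrable D MeasureTheory.volume 0 1 := hDc.intervalIntegrable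
  have hFTC := intervalIntegral.integral_eq_sub_of_hasDerivAt hW hInt
  have hfz : f z = ∫ t in (0:ℝ)..1, D t := by
    rw [hFTC]
    have e1 : h (((1:ℝ):ℂ) * z) + star (g (((1:ℝ):ℂ) * z)) = f z := by
      rw [hf z hzball]; push_cast; rw [one_mul]; rfl
    have e0 : h (((0:ℝ):ℂ) * z) + star (g (((0:ℝ):ℂ) * z)) = f 0 := by
      rw [hf 0 h0ball]; push_cast; rw [zero_mul]; rfl
    rw [e1, e0, hf0, sub_zero]
  -- split off the constant part
  set C : ℂ := deriv h 0 * z + star (deriv g 0 * z) with hCdef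
  set E : ℝ → ℂ := fun t => D t - C with hEdef
  have hEI : IntervalIntegrable E MeasureTheory.volume 0 1 :=
    hInt.sub intervalIntegrable_const
  have hsplit : f z = C + ∫ t in (0:ℝ)..1, E t := by
    have hs1 : ∫ t in (0:ℝ)..1, E t
        = (∫ t in (0:ℝ)..1, D t) - ∫ _t in (0:ℝ)..1, C :=
      intervalIntegral.integral_sub hInt intervalIntegrable_const
    rw [intervalIntegral.integral_const] at hs1
    rw [hfz, hs1]
    simp only [sub_zero, one_smul]
    ring
  -- pointwise bound on E
  set Bnd : ℝ → ℝ := fun t => K * lam * (t * ρ) / (1 - t * ρ) * ρ with hBnddef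
  have hnormE : ∀ t ∈ Set.Icc (0:ℝ) 1, ‖E t‖ ≤ Bnd t := by
    intro t ht
    have htz : ‖(t:ℂ) * z‖ = t * ρ := by
      rw [norm_mul, Complex.norm_real, Real.norm_eq_abs, _root_.abs_of_nonneg ht.1, hzn]
    have h1 : ‖(t:ℂ) * z‖ < 1 := by rw [htz]; nlinarith [ht.2]
    have hpair := pair_diff_bound hφd hψd hKlam h1
    have hE : E t = (deriv h ((t:ℂ) * z) - deriv h 0) * z
        + star ((deriv g ((t:ℂ) * z) - deriv g 0) * z) := by
      rw [hEdef]
      simp only [hDdef, hCdef]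
      rw [show (deriv g ((t:ℂ) * z) - deriv g 0) * z
          = deriv g ((t:ℂ) * z) * z - deriv g 0 * z from by ring, star_sub]
      ring
    rw [hE]
    calc ‖(deriv h ((t:ℂ) * z) - deriv h 0) * z
          + star ((deriv g ((t:ℂ) * z) - deriv g 0) * z)‖
        ≤ ‖(deriv h ((t:ℂ) * z) - deriv h 0) * z‖
          + ‖star ((deriv g ((t:ℂ) * z) - deriv g 0) * z)‖ := norm_add_le _ _
      _ = (‖deriv h ((t:ℂ) * z) - deriv h 0‖ + ‖deriv g ((t:ℂ) * z) - deriv g 0‖) * ρ := by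
          rw [norm_star, norm_mul, norm_mul, hzn]; ring
      _ ≤ K * lam * ‖(t:ℂ) * z‖ / (1 - ‖(t:ℂ) * z‖) * ρ :=
          mul_le_mul_of_nonneg_right hpair hρ0.le
      _ = Bnd t := by rw [htz]
  -- integrate the bound
  have h1tρ : ∀ t ∈ Set.uIcc (0:ℝ) 1, (0:ℝ) < 1 - t * ρ := by
    intro t ht
    rw [Set.uIcc_of_le (by norm_num : (0:ℝ) ≤ 1)] at ht
    nlinarith [ht.1, ht.2]
  have hBc : ContinuousOn Bnd (Set.uIcc (0:ℝ) 1) := by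
    apply ContinuousOn.mul _ continuousOn_const
    apply ContinuousOn.div (by fun_prop) (by fun_prop)
    intro t ht
    exact ne_of_gt (h1tρ t ht)
  have hBI : IntervalIntegrable Bnd MeasureTheory.volume 0 1 := hBc.intervalIntegrable
  set G : ℝ → ℝ := fun t => K * lam * (-(t * ρ) - Real.log (1 - t * ρ)) with hGdef
  have hGD : ∀ t ∈ Set.uIcc (0:ℝ) 1, HasDerivAt G (Bnd t) t := by
    intro t ht
    have h1t := h1tρ t ht
    have hlin : HasDerivAt (fun t : ℝ => 1 - t * ρ) (-ρ) t := by
      simpa using ((hasDerivAt_id t).mul_const ρ).const_sub 1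
    have hlog : HasDerivAt (fun t : ℝ => Real.log (1 - t * ρ)) ((1 - t * ρ)⁻¹ * (-ρ)) t :=
      by have := (Real.hasDerivAt_log h1t.ne').comp t hlin; exact this
    have hcand : HasDerivAt G (K * lam * (-ρ - (1 - t * ρ)⁻¹ * (-ρ))) t := by
      have hc := (((hasDerivAt_id t).mul_const ρ).neg.sub hlog).const_mul (K * lam)
      simpa using hc
    convert hcand using 1
    rw [hBnddef]
    have hne : 1 - t * ρ ≠ 0 := h1t.ne'
    field_simp
    ring
  have hBval : ∫ t in (0:ℝ)..1, Bnd t = K * lam * (-ρ - Real.log (1 - ρ)) := by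
    rw [intervalIntegral.integral_eq_sub_of_hasDerivAt hGD hBI, hGdef]
    simp
  -- putting everything together
  have hCnorm : ρ * (Ah - Bg) ≤ ‖C‖ := by
    have h1 : ‖deriv h 0 * z‖ - ‖-(star (deriv g 0 * z))‖
        ≤ ‖deriv h 0 * z - (-(star (deriv g 0 * z)))‖ :=
      norm_sub_norm_le _ _
    rw [sub_neg_eq_add, norm_neg] at h1
    calc ρ * (Ah - Bg)
        = ‖deriv h 0 * z‖ - ‖star (deriv g 0 * z)‖ := by
          rw [norm_star, norm_mul, norm_mul, hzn,
            ← hAh, ← hBg]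
          ring
      _ ≤ ‖C‖ := h1
  have hEnorm : ‖∫ t in (0:ℝ)..1, E t‖ ≤ K * lam * (-ρ - Real.log (1 - ρ)) := by
    calc ‖∫ t in (0:ℝ)..1, E t‖
        ≤ ∫ t in (0:ℝ)..1, ‖E t‖ :=
          intervalIntegral.norm_integral_le_integral_norm zero_le_one
      _ ≤ ∫ t in (0:ℝ)..1, Bnd t :=
          intervalIntegral.integral_mono_on zero_le_one hEI.norm hBI hnormE
      _ = K * lam * (-ρ - Real.log (1 - ρ)) := hBval
  have hfzn : ‖C‖ - ‖∫ t in (0:ℝ)..1, E t‖ ≤ ‖f z‖ := by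
    rw [hsplit]
    have h1 : ‖C‖ - ‖-(∫ t in (0:ℝ)..1, E t)‖ ≤ ‖C - (-(∫ t in (0:ℝ)..1, E t))‖ :=
      norm_sub_norm_le _ _
    rwa [sub_neg_eq_add, norm_neg] at h1
  have hρd : ρ / Real.sqrt K ≤ ρ * (Ah - Bg) := by
    rw [div_eq_mul_one_div]
    exact mul_le_mul_of_nonneg_left hdK hρ0.le
  linarith
end
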